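/- arXiv:1904.02897 — 12 statements merged into one kernel-verified Lean document; each statement's English description precedes it below -/
import Mathlib

section
/- Every ω-monoid is either a tempered monoid or a positive scalar multiple of a numerical semigroup. Precisely: let Ω ⊆ ℝ be closed under addition and be the range of a strictly increasing sequence a : ℕ → ℝ with a(0) = 0. Then either a(n+1) − a(n) → 0 as n → ∞, or there exist a real number λ > 0 and a numerical semigroup S such that Ω = {λ·s : s ∈ S}. -/
open Filter Topology

lemma omega_nsmul_mem {Ω : Set ℝ} (h0Ω : (0:ℝ) ∈ Ω)
    (hadd : ∀ x ∈ Ω, ∀ y ∈ Ω, x + y ∈ Ω) :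
    ∀ (n : ℕ), ∀ x ∈ Ω, (n : ℝ) * x ∈ Ω := by
  intro n
  induction n with
  | zero => intro x hx; simpa using h0Ω
  | succ n ih =>
    intro x hx
    have := hadd _ (ih x hx) _ hx
    have he : ((n+1 : ℕ) : ℝ) * x = (n:ℝ) * x + x := by push_cast; ring
    rwa [he]

lemma omega_gap_aux {Ω : Set ℝ} (h0Ω : (0:ℝ) ∈ Ω)
    (hadd : ∀ x ∈ Ω, ∀ y ∈ Ω, x + y ∈ Ω)
    {x y d t : ℝ} (hx : x ∈ Ω) (hy : y ∈ Ω) (hy0 : 0 < y) (hd0 : 0 < d)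
    (hxy : x = y + d) (ht : (d + x) * y / d ≤ t) :
    ∃ s ∈ Ω, t < s ∧ s ≤ t + d := by
  have hx0 : 0 < x := by nlinarith
  have ht0 : 0 ≤ t := le_trans (by positivity) ht
  set k := ⌊t / y⌋₊ with hk
  have hky : (k:ℝ) * y ≤ t := by
    have h := Nat.floor_le (div_nonneg ht0 hy0.le)
    calc (k:ℝ)*y ≤ (t/y)*y := by nlinarith
      _ = t := div_mul_cancel₀ t hy0.ne'
  have hky2 : t < ((k:ℝ) + 1) * y := by
    have h := Nat.lt_floor_add_one (t / y)
    calc t = (t/y)*y := (div_mul_cancel₀ t hy0.ne').symm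
      _ < ((k:ℝ)+1)*y := by nlinarith
  have hkx' : (k:ℝ) * x = (k:ℝ)*y + (k:ℝ)*d := by rw [hxy]; ring
  have hkx : t + d ≤ (k:ℝ) * x := by
    have h1 : (d + x) * y ≤ t * d := by
      rw [div_le_iff₀ hd0] at ht; linarith
    have h2 : (t - y) * d < (k:ℝ)*y*d := by nlinarith [hky2]
    have h3 : (t - y) * y < (k:ℝ)*y*y := by nlinarith [hky2]
    have h4 : (t + d) * y < ((k:ℝ)*x) * y := by nlinarith [h1, h2, h3]
    have := lt_of_mul_lt_mul_right h4 hy0.le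
    linarith
  set j0 := ⌊(t - (k:ℝ)*y) / d⌋₊ with hj0
  have hu0 : 0 ≤ t - (k:ℝ)*y := by linarith
  have hja : (j0:ℝ) * d ≤ t - (k:ℝ)*y := by
    have h := Nat.floor_le (div_nonneg hu0 hd0.le)
    calc (j0:ℝ)*d ≤ ((t - (k:ℝ)*y)/d)*d := by nlinarith
      _ = _ := div_mul_cancel₀ _ hd0.ne'
  have hjb : t - (k:ℝ)*y < ((j0:ℝ)+1) * d := by
    have h := Nat.lt_floor_add_one ((t - (k:ℝ)*y) / d)
    calc t - (k:ℝ)*y = ((t - (k:ℝ)*y)/d)*d := (div_mul_cancel₀ _ hd0.ne').symm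
      _ < ((j0:ℝ)+1)*d := by nlinarith
  have hjk : j0 + 1 ≤ k := by
    have h5 : ((j0:ℝ)+1) * d ≤ (k:ℝ) * d := by nlinarith [hja, hkx, hkx']
    have hle : ((j0:ℝ)+1) ≤ (k:ℝ) := le_of_mul_le_mul_right h5 hd0
    exact_mod_cast hle
  have hcast : ((k - (j0+1) : ℕ):ℝ) = (k:ℝ) - ((j0:ℝ)+1) := by
    push_cast [Nat.cast_sub hjk]; ring
  refine ⟨((j0+1:ℕ):ℝ) * x + ((k - (j0+1) : ℕ):ℝ) * y,
    hadd _ (omega_nsmul_mem h0Ω hadd (j0+1) x hx) _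
      (omega_nsmul_mem h0Ω hadd (k - (j0+1)) y hy), ?_, ?_⟩
  · rw [hcast]; push_cast; nlinarith [hjb]
  · rw [hcast]; push_cast; nlinarith [hja]

lemma nat_monoid_mul_mem {S : Set ℕ} (hadd : ∀ x ∈ S, ∀ y ∈ S, x + y ∈ S)
    (h0 : 0 ∈ S) : ∀ (k : ℕ), ∀ c ∈ S, k * c ∈ S := by
  intro k
  induction k with
  | zero => intro c hc; simpa using h0
  | succ k ih =>
    intro c hc
    have := hadd _ (ih c hc) _ hc
    have he : (k+1) * c = k * c + c := by ring
    rwa [he]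

lemma nat_monoid_cofinite {S : Set ℕ} (hadd : ∀ x ∈ S, ∀ y ∈ S, x + y ∈ S)
    (h0 : 0 ∈ S) {m : ℕ} (hm : m ∈ S) (hm1 : m + 1 ∈ S) : Sᶜ.Finite := by
  have key : ∀ n, m * m ≤ n → n ∈ S := by
    intro n hn
    rcases Nat.eq_zero_or_pos m with rfl | hmpos
    · have : n * 1 ∈ S := nat_monoid_mul_mem hadd h0 n 1 (by simpa using hm1)
      simpa using this
    · set q := n / m with hq
      set r := n % m with hr
      have hrm : r < m := Nat.mod_lt _ hmpos
      have hqm : m ≤ q := (Nat.le_div_iff_mul_le hmpos).2 hn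
      have hrq : r ≤ q := le_trans hrm.le hqm
      set u := q - r with hu
      have he : q = r + u := by omega
      have hne : n = r * (m+1) + u * m := by
        have h1 : m * q + r = n := Nat.div_add_mod n m
        calc n = m * (r + u) + r := by rw [← he]; exact h1.symm
          _ = r * (m+1) + u * m := by ring
      rw [hne]
      exact hadd _ (nat_monoid_mul_mem hadd h0 r _ hm1) _
        (nat_monoid_mul_mem hadd h0 u _ hm)
  have hsub : Sᶜ ⊆ Set.Iio (m * m) := by
    intro n hn
    by_contra h
    exact hn (key n (by simpa [Set.mem_Iio] using h))
  exact (Set.finite_Iio _).subset hsub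

/-- Every ω-monoid is either a tempered monoid or a positive scalar multiple of a
numerical semigroup. -/
theorem omega_monoid_tempered_or_scaled_numerical_semigroup
    (Ω : Set ℝ) (a : ℕ → ℝ)
    (hadd : ∀ x ∈ Ω, ∀ y ∈ Ω, x + y ∈ Ω)
    (hmono : StrictMono a) (h0 : a 0 = 0) (hrange : Set.range a = Ω) :
    Tendsto (fun n => a (n + 1) - a n) atTop (𝓝 0) ∨
      ∃ l : ℝ, 0 < l ∧ ∃ S : Set ℕ,
        (0 ∈ S ∧ (∀ x ∈ S, ∀ y ∈ S, x + y ∈ S) ∧ Sᶜ.Finite) ∧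
        Ω = (fun s : ℕ => l * (s : ℝ)) '' S := by
  classical
  have h0Ω : (0:ℝ) ∈ Ω := by
    rw [← hrange]; exact ⟨0, h0⟩
  have hnonneg : ∀ z ∈ Ω, 0 ≤ z := by
    intro z hz
    rw [← hrange] at hz
    obtain ⟨n, rfl⟩ := hz
    rw [← h0]
    exact hmono.monotone (Nat.zero_le n)
  set D : AddSubgroup ℝ :=
    { carrier := {z : ℝ | ∃ u ∈ Ω, ∃ v ∈ Ω, z = u - v}
      zero_mem' := ⟨0, h0Ω, 0, h0Ω, by ring⟩
      add_mem' := by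
        rintro p q ⟨u, hu, v, hv, rfl⟩ ⟨u', hu', v', hv', rfl⟩
        exact ⟨u + u', hadd _ hu _ hu', v + v', hadd _ hv _ hv', by ring⟩
      neg_mem' := by
        rintro p ⟨u, hu, v, hv, rfl⟩
        exact ⟨v, hv, u, hu, by ring⟩ } with hD
  have hDmem : ∀ z : ℝ, z ∈ D ↔ ∃ u ∈ Ω, ∃ v ∈ Ω, z = u - v := fun z => Iff.rfl
  rcases AddSubgroup.dense_or_cyclic D with hdense | ⟨g, hg⟩
  · -- dense case: tempered
    left
    rw [Metric.tendsto_atTop]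
    intro ε hε
    obtain ⟨d, hdD, hd0, hdε⟩ := hdense.exists_between hε
    obtain ⟨u, hu, v, hv, rfl⟩ := (hDmem d).1 hdD
    -- build x, y ∈ Ω with y > 0, x = y + (u - v)
    set dd := u - v with hdd
    have hu0 : 0 < u := lt_of_le_of_lt (hnonneg v hv) (by linarith)
    set y := v + u with hy
    set x := u + u with hx
    have hyΩ : y ∈ Ω := hadd _ hv _ hu
    have hxΩ : x ∈ Ω := hadd _ hu _ hu
    have hy0 : 0 < y := lt_of_le_of_lt (hnonneg v hv) (by simp [hy]; linarith)
    have hxy : x = y + dd := by simp [hx, hy, hdd]; ring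
    set C := (dd + x) * y / dd with hC
    -- find N with a N ≥ C
    obtain ⟨k0, hk0⟩ := exists_nat_ge (C / y)
    have hk0C : C ≤ (k0 : ℝ) * y := by
      rw [div_le_iff₀ hy0] at hk0; linarith
    have hk0Ω : (k0 : ℝ) * y ∈ Ω := omega_nsmul_mem h0Ω hadd k0 y hyΩ
    rw [← hrange] at hk0Ω
    obtain ⟨N, hN⟩ := hk0Ω
    refine ⟨N, fun n hn => ?_⟩
    have htC : C ≤ a n := by
      calc C ≤ (k0:ℝ) * y := hk0C
        _ = a N := hN.symm
        _ ≤ a n := hmono.monotone hn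
    obtain ⟨s, hsΩ, hs1, hs2⟩ := omega_gap_aux h0Ω hadd hxΩ hyΩ hy0 hd0 hxy htC
    rw [← hrange] at hsΩ
    obtain ⟨m, rfl⟩ := hsΩ
    have hmn : n + 1 ≤ m := by
      by_contra h
      push_neg at h
      exact absurd (hmono.monotone (Nat.lt_succ_iff.mp h)) (not_le.2 hs1)
    have hgap : a (n+1) - a n ≤ dd := by
      have := hmono.monotone hmn
      linarith
    have hpos : 0 < a (n+1) - a n := sub_pos.2 (hmono (Nat.lt_succ_self n))
    rw [Real.dist_eq]
    rw [sub_zero, abs_of_pos hpos]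
    linarith
  · -- cyclic case
    right
    have hΩD : ∀ z ∈ Ω, z ∈ D := fun z hz => ⟨z, hz, 0, h0Ω, by ring⟩
    have hg0 : g ≠ 0 := by
      rintro rfl
      have h1 : a 1 ∈ D := hΩD _ (by rw [← hrange]; exact ⟨1, rfl⟩)
      rw [hg, AddSubgroup.mem_closure_singleton] at h1
      obtain ⟨n, hn⟩ := h1
      have : a 0 < a 1 := hmono (Nat.lt_succ_self 0)
      simp at hn
      rw [← hn, h0] at this
      exact lt_irrefl _ this
    set l := |g| with hl
    have hl0 : 0 < l := abs_pos.2 hg0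
    set S : Set ℕ := {s : ℕ | l * (s:ℝ) ∈ Ω} with hS
    have hcover : ∀ z ∈ Ω, ∃ s ∈ S, z = l * (s:ℝ) := by
      intro z hz
      have h1 : z ∈ D := hΩD z hz
      rw [hg, AddSubgroup.mem_closure_singleton] at h1
      obtain ⟨n, hn⟩ := h1
      have hzn : z = (n:ℝ) * g := by rw [← hn]; simp [zsmul_eq_mul]
      have hz0 : 0 ≤ z := hnonneg z hz
      rcases abs_choice g with habs | habs
      · -- l = g, g > 0
        have hgpos : 0 < g := by rw [← habs]; exact hl0
        have hn0 : 0 ≤ n := by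
          by_contra h
          push_neg at h
          have : z < 0 := by
            rw [hzn]
            have : (n:ℝ) < 0 := by exact_mod_cast h
            exact mul_neg_of_neg_of_pos this hgpos
          linarith
        have htn : ((n.toNat : ℕ) : ℝ) = (n : ℝ) := by
          rw [← Int.cast_natCast, Int.toNat_of_nonneg hn0]
        refine ⟨n.toNat, ?_, ?_⟩
        · show l * (n.toNat : ℝ) ∈ Ω
          have : l * (n.toNat : ℝ) = z := by
            simp only [hzn, hl, habs]
            rw [htn]; ring
          rwa [this]
        · simp only [hzn, hl, habs]
          rw [htn]; ring
      · -- l = -g, g < 0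
        have hgneg : g < 0 := by
          rcases lt_trichotomy g 0 with h | h | h
          · exact h
          · exact absurd h hg0
          · exfalso; rw [abs_of_pos h] at habs; linarith
        have hn0 : n ≤ 0 := by
          by_contra h
          push_neg at h
          have : z < 0 := by
            rw [hzn]
            have : (0:ℝ) < (n:ℝ) := by exact_mod_cast h
            exact mul_neg_of_pos_of_neg this hgneg
          linarith
        have htn : (((-n).toNat : ℕ) : ℝ) = -(n : ℝ) := by
          rw [← Int.cast_natCast, Int.toNat_of_nonneg (by omega : (0:ℤ) ≤ -n)]
          push_cast; ring
        refine ⟨(-n).toNat, ?_, ?_⟩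
        · show l * ((-n).toNat : ℝ) ∈ Ω
          have : l * ((-n).toNat : ℝ) = z := by
            simp only [hzn, hl, habs]
            rw [htn]; ring
          rwa [this]
        · simp only [hzn, hl, habs]
          rw [htn]; ring
    have hSimg : Ω = (fun s : ℕ => l * (s : ℝ)) '' S := by
      ext z
      constructor
      · intro hz
        obtain ⟨s, hs, hzs⟩ := hcover z hz
        exact ⟨s, hs, hzs.symm⟩
      · rintro ⟨s, hs, rfl⟩
        exact hs
    have hS0 : 0 ∈ S := by show l * ((0:ℕ):ℝ) ∈ Ω; simpa using h0Ω
    have hSadd : ∀ p ∈ S, ∀ q ∈ S, p + q ∈ S := by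
      intro p hp q hq
      show l * ((p + q : ℕ):ℝ) ∈ Ω
      have : l * ((p + q : ℕ):ℝ) = l * (p:ℝ) + l * (q:ℝ) := by push_cast; ring
      rw [this]
      exact hadd _ hp _ hq
    -- find consecutive elements of S
    have hgD : g ∈ D := by
      rw [hg]
      exact AddSubgroup.mem_closure_singleton.2 ⟨1, one_zsmul g⟩
    obtain ⟨u, hu, v, hv, hguv⟩ := (hDmem g).1 hgD
    obtain ⟨s1, hs1, hus1⟩ := hcover u hu
    obtain ⟨s2, hs2, hvs2⟩ := hcover v hv
    have habs1 : |(s1:ℝ) - (s2:ℝ)| = 1 := by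
      have h1 : l * |(s1:ℝ) - (s2:ℝ)| = l := by
        calc l * |(s1:ℝ) - (s2:ℝ)| = |l * ((s1:ℝ) - (s2:ℝ))| := by
              rw [abs_mul, abs_of_pos hl0]
          _ = |u - v| := by rw [hus1, hvs2]; ring_nf
          _ = |g| := by rw [← hguv]
          _ = l := rfl
      have := mul_left_cancel₀ hl0.ne' (by rw [h1, mul_one] : l * |(s1:ℝ) - (s2:ℝ)| = l * 1)
      exact this
    have hcons : ∃ m, m ∈ S ∧ m + 1 ∈ S := by
      rcases abs_eq (by norm_num : (0:ℝ) ≤ 1) |>.1 habs1 with h | h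
      · have hs12 : s1 = s2 + 1 := by exact_mod_cast (by linarith : (s1:ℝ) = (s2:ℝ) + 1)
        exact ⟨s2, hs2, hs12 ▸ hs1⟩
      · have hs21 : s2 = s1 + 1 := by exact_mod_cast (by linarith : (s2:ℝ) = (s1:ℝ) + 1)
        exact ⟨s1, hs1, hs21 ▸ hs2⟩
    obtain ⟨m, hmS, hm1S⟩ := hcons
    exact ⟨l, hl0, S, ⟨hS0, hSadd, nat_monoid_cofinite hSadd hS0 hmS hm1S⟩, hSimg⟩
end

section
/- If an ω-monoid is not a tempered monoid, then it is a positive scalar multiple of a numerical semigroup: if Ω ⊆ ℝ is closed under addition, is the range of a strictly increasing sequence a : ℕ → ℝ with a(0) = 0, and the sequence of differences a(n+1) − a(n) does not converge to 0, then there exist λ > 0 and a numerical semigroup S with Ω = {λ·s : s ∈ S}. -/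
open Filter Topology

/-- If an ω-monoid is not a tempered monoid, then it is a positive scalar multiple of a
numerical semigroup. -/
theorem not_tempered_is_scaled_numerical_semigroup
    (Ω : Set ℝ) (a : ℕ → ℝ)
    (hadd : ∀ x ∈ Ω, ∀ y ∈ Ω, x + y ∈ Ω)
    (hmono : StrictMono a) (h0 : a 0 = 0) (hrange : Set.range a = Ω)
    (hnt : ¬ Tendsto (fun n => a (n + 1) - a n) atTop (𝓝 0)) :
    ∃ l : ℝ, 0 < l ∧ ∃ S : Set ℕ,
      (0 ∈ S ∧ (∀ x ∈ S, ∀ y ∈ S, x + y ∈ S) ∧ Sᶜ.Finite) ∧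
      Ω = (fun s : ℕ => l * (s : ℝ)) '' S := by
  classical
  have hmem : ∀ n, a n ∈ Ω := fun n => hrange ▸ Set.mem_range_self n
  have h0mem : (0 : ℝ) ∈ Ω := h0 ▸ hmem 0
  have hnonneg : ∀ x ∈ Ω, 0 ≤ x := by
    intro x hx
    rw [← hrange] at hx
    obtain ⟨n, rfl⟩ := hx
    calc (0:ℝ) = a 0 := h0.symm
      _ ≤ a n := hmono.monotone (Nat.zero_le n)
  have hsmul : ∀ x ∈ Ω, ∀ k : ℕ, (k : ℝ) * x ∈ Ω := by
    intro x hx k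
    induction k with
    | zero => simpa using h0mem
    | succ n ih =>
      have h : ((n+1 : ℕ) : ℝ) * x = (n : ℝ) * x + x := by push_cast; ring
      rw [h]; exact hadd _ ih _ hx
  have ha1 : 0 < a 1 := by
    have := hmono Nat.zero_lt_one
    rwa [h0] at this
  have hunb : ∀ M : ℝ, ∃ N, ∀ n ≥ N, M < a n := by
    intro M
    obtain ⟨k, hk⟩ := exists_nat_gt (M / a 1)
    have hk' : M < (k:ℝ) * a 1 := by
      rw [div_lt_iff₀ ha1] at hk; linarith
    have hkΩ : (k:ℝ) * a 1 ∈ Ω := hsmul _ (hmem 1) k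
    rw [← hrange] at hkΩ
    obtain ⟨m, hm⟩ := hkΩ
    refine ⟨m, fun n hn => ?_⟩
    rw [← hm] at hk'
    exact hk'.trans_le (hmono.monotone hn)
  rw [Metric.tendsto_atTop] at hnt
  push_neg at hnt
  obtain ⟨ε, hε, hfreq⟩ := hnt
  -- main discreteness lemma
  have key : ∀ x ∈ Ω, ∀ y ∈ Ω, 0 < x → x < y → y - x < ε → False := by
    intro x hx y hy hx0 hxy hlt
    set d := y - x with hd
    have hd0 : 0 < d := sub_pos.2 hxy
    have sub : ∀ t : ℝ, x + x * x / d ≤ t → ∃ ω ∈ Ω, t < ω ∧ ω ≤ t + d := by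
      intro t ht
      have ht0 : 0 ≤ t := le_trans (by positivity) ht
      set q : ℕ := ⌊t / x⌋₊ with hqdef
      have hq1 : (q : ℝ) * x ≤ t := by
        have h1 : (q:ℝ) ≤ t / x := Nat.floor_le (div_nonneg ht0 hx0.le)
        exact (le_div_iff₀ hx0).mp h1
      have hq2 : t < ((q:ℝ) + 1) * x := by
        have h1 : t / x < (q:ℝ) + 1 := Nat.lt_floor_add_one (t / x)
        exact (div_lt_iff₀ hx0).mp h1
      have hxxd : x * x / d * d = x * x := div_mul_cancel₀ _ hd0.ne'
      have hqd : x ≤ (q:ℝ) * d := by nlinarith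
      set r : ℝ := t - (q:ℝ) * x with hrdef
      have hr0 : 0 ≤ r := by linarith
      have hrx : r < x := by linarith
      set j : ℕ := ⌊r / d⌋₊ + 1 with hjdef
      have hj1 : ((j:ℝ) - 1) * d ≤ r := by
        have h1 : ((⌊r / d⌋₊ : ℝ)) ≤ r / d := Nat.floor_le (div_nonneg hr0 hd0.le)
        have h2 : ((j:ℝ) - 1) = (⌊r / d⌋₊ : ℝ) := by rw [hjdef]; push_cast; ring
        rw [h2]
        exact (le_div_iff₀ hd0).mp h1
      have hj2 : r < (j:ℝ) * d := by
        have h1 : r / d < (⌊r / d⌋₊ : ℝ) + 1 := Nat.lt_floor_add_one (r / d)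
        have h2 : (j:ℝ) = (⌊r / d⌋₊ : ℝ) + 1 := by rw [hjdef]; push_cast; ring
        rw [h2]
        exact (div_lt_iff₀ hd0).mp h1
      have hjq : j ≤ q := by
        by_contra hcon
        push_neg at hcon
        have h1 : (q:ℝ) + 1 ≤ (j:ℝ) := by exact_mod_cast hcon
        nlinarith
      refine ⟨((q - j : ℕ):ℝ) * x + (j:ℝ) * y, hadd _ (hsmul _ hx _) _ (hsmul _ hy _), ?_, ?_⟩
      · have hcast : ((q - j : ℕ):ℝ) = (q:ℝ) - (j:ℝ) := by
          rw [Nat.cast_sub hjq]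
        rw [hcast]
        have : y = x + d := by rw [hd]; ring
        rw [this]
        nlinarith
      · have hcast : ((q - j : ℕ):ℝ) = (q:ℝ) - (j:ℝ) := by
          rw [Nat.cast_sub hjq]
        rw [hcast]
        have : y = x + d := by rw [hd]; ring
        rw [this]
        nlinarith
    obtain ⟨N, hN⟩ := hunb (x + x * x / d)
    obtain ⟨n, hnN, hdist⟩ := hfreq N
    obtain ⟨ω, hω, h1, h2⟩ := sub (a n) (hN n hnN).le
    rw [← hrange] at hω
    obtain ⟨m, rfl⟩ := hω
    have hnm : n < m := hmono.lt_iff_lt.mp h1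
    have hle : a (n+1) ≤ a m := hmono.monotone hnm
    have hgappos : 0 < a (n+1) - a n := sub_pos.2 (hmono (Nat.lt_succ_self n))
    rw [Real.dist_eq, sub_zero, abs_of_pos hgappos] at hdist
    linarith
  have hdisc : ∀ u ∈ Ω, ∀ v ∈ Ω, v < u → u - v < ε → False := by
    intro u hu v hv hvu hlt
    rcases eq_or_lt_of_le (hnonneg v hv) with h | h
    · have hu0 : 0 < u := h ▸ hvu
      exact key u hu (u + u) (hadd u hu u hu) hu0 (by linarith) (by rw [← h] at hlt; linarith)
    · exact key v hv u hu h hvu hlt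
  -- the difference group
  let G : AddSubgroup ℝ :=
    { carrier := {g : ℝ | ∃ u ∈ Ω, ∃ v ∈ Ω, g = u - v}
      add_mem' := by
        rintro p p' ⟨u, hu, v, hv, rfl⟩ ⟨u', hu', v', hv', rfl⟩
        exact ⟨u + u', hadd _ hu _ hu', v + v', hadd _ hv _ hv', by ring⟩
      zero_mem' := ⟨0, h0mem, 0, h0mem, by ring⟩
      neg_mem' := by
        rintro p ⟨u, hu, v, hv, rfl⟩
        exact ⟨v, hv, u, hu, by ring⟩ }
  have hΩG : ∀ ω ∈ Ω, ω ∈ G := fun ω hω => ⟨ω, hω, 0, h0mem, (sub_zero ω).symm⟩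
  have hcyc : ∃ c : ℝ, G = AddSubgroup.closure {c} := by
    rcases G.dense_or_cyclic with hdense | h
    · exfalso
      obtain ⟨g, hgG, hg0, hgε⟩ := hdense.exists_between hε
      obtain ⟨u, hu, v, hv, rfl⟩ := hgG
      exact hdisc u hu v hv (by linarith) (by linarith)
    · exact h
  obtain ⟨c, hc⟩ := hcyc
  have hc0 : c ≠ 0 := by
    intro hcz
    have h1 : a 1 ∈ G := hΩG _ (hmem 1)
    rw [hc, AddSubgroup.mem_closure_singleton] at h1
    obtain ⟨n, hn⟩ := h1
    rw [hcz, smul_zero] at hn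
    exact absurd hn.symm (ne_of_gt ha1)
  set l := |c| with hldef
  have hl0 : 0 < l := abs_pos.mpr hc0
  have hcl : c = l ∨ c = -l := (abs_eq (abs_nonneg c)).mp rfl
  have hrep : ∀ ω ∈ Ω, ∃ k : ℕ, ω = (k : ℝ) * l := by
    intro ω hω
    have hG : ω ∈ G := hΩG _ hω
    rw [hc, AddSubgroup.mem_closure_singleton] at hG
    obtain ⟨n, hn⟩ := hG
    have h2 : ∃ m : ℤ, ω = (m : ℝ) * l := by
      rcases hcl with h | h
      · exact ⟨n, by rw [← hn, h]; push_cast [zsmul_eq_mul]; ring⟩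
      · exact ⟨-n, by rw [← hn, h]; push_cast [zsmul_eq_mul]; ring⟩
    obtain ⟨m, hm⟩ := h2
    have hm0 : 0 ≤ m := by
      by_contra hneg
      push_neg at hneg
      have hml : (m:ℝ) * l < 0 :=
        mul_neg_of_neg_of_pos (by exact_mod_cast hneg) hl0
      have := hnonneg ω hω
      linarith
    refine ⟨m.toNat, ?_⟩
    rw [hm]
    congr 1
    exact_mod_cast (Int.toNat_of_nonneg hm0).symm
  set S : Set ℕ := {s : ℕ | l * (s:ℝ) ∈ Ω} with hSdef
  have h0S : 0 ∈ S := by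
    show l * ((0:ℕ):ℝ) ∈ Ω
    simpa using h0mem
  have hSadd : ∀ x ∈ S, ∀ y ∈ S, x + y ∈ S := by
    intro x hx y hy
    show l * (((x + y : ℕ)):ℝ) ∈ Ω
    have h : l * (((x + y : ℕ)):ℝ) = l * (x:ℝ) + l * (y:ℝ) := by push_cast; ring
    rw [h]
    exact hadd _ hx _ hy
  have hSsmul : ∀ s ∈ S, ∀ k : ℕ, k * s ∈ S := by
    intro s hs k
    show l * (((k * s : ℕ)):ℝ) ∈ Ω
    have h : l * (((k * s : ℕ)):ℝ) = (k:ℝ) * (l * (s:ℝ)) := by push_cast; ring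
    rw [h]
    exact hsmul _ hs k
  -- find q with q ∈ S and q+1 ∈ S
  have hlG : l ∈ G := by
    rw [hc]
    rcases hcl with h | h
    · rw [← h]; exact AddSubgroup.mem_closure_singleton.mpr ⟨1, one_smul _ _⟩
    · exact AddSubgroup.mem_closure_singleton.mpr ⟨-1, by rw [h]; simp⟩
  obtain ⟨u, hu, v, hv, hluv⟩ := hlG
  obtain ⟨p, hp⟩ := hrep u hu
  obtain ⟨q, hq⟩ := hrep v hv
  have hpq : p = q + 1 := by
    have h1 : (p:ℝ) * l = (q:ℝ) * l + l := by rw [← hp, ← hq]; linarith [hluv]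
    have h2 : (p:ℝ) = (q:ℝ) + 1 := by
      have := mul_right_cancel₀ hl0.ne' (by linarith [h1] : (p:ℝ) * l = ((q:ℝ) + 1) * l)
      exact this
    exact_mod_cast h2
  have hqS : q ∈ S := by
    show l * (q:ℝ) ∈ Ω
    rw [mul_comm, ← hq]; exact hv
  have hq1S : q + 1 ∈ S := by
    show l * ((q+1:ℕ):ℝ) ∈ Ω
    rw [mul_comm]
    have : (((q+1:ℕ)):ℝ) = (p:ℝ) := by rw [hpq]
    rw [this, ← hp]; exact hu
  have hbig : ∀ n : ℕ, q * q ≤ n → n ∈ S := by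
    intro n hn
    rcases Nat.eq_zero_or_pos q with hq0 | hq0
    · have h1S : 1 ∈ S := by rw [hq0] at hq1S; simpa using hq1S
      clear hn
      induction n with
      | zero => exact h0S
      | succ m ih => exact hSadd m ih 1 h1S
    · have hr : n % q < q := Nat.mod_lt n hq0
      have hkq : q ≤ n / q := (Nat.le_div_iff_mul_le hq0).mpr hn
      have hrk : n % q ≤ n / q := le_trans hr.le hkq
      have hnval : n = (n / q - n % q) * q + (n % q) * (q + 1) := by
        have h1 := Nat.div_add_mod n q
        have h2 : (n / q - n % q) * q + (n % q) * (q + 1)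
            = (n / q - n % q) * q + (n % q) * q + n % q := by ring
        rw [h2, ← Nat.add_mul, Nat.sub_add_cancel hrk, Nat.mul_comm]
        omega
      rw [hnval]
      exact hSadd _ (hSsmul q hqS _) _ (hSsmul (q+1) hq1S _)
  refine ⟨l, hl0, S, ⟨h0S, hSadd, ?_⟩, ?_⟩
  · refine Set.Finite.subset (Set.finite_Iio (q * q)) ?_
    intro n hn
    by_contra hcon
    simp only [Set.mem_Iio, not_lt] at hcon
    exact hn (hbig n hcon)
  · ext ω
    constructor
    · intro hω
      obtain ⟨k, hk⟩ := hrep ω hω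
      refine ⟨k, ?_, ?_⟩
      · show l * (k:ℝ) ∈ Ω
        rw [mul_comm, ← hk]; exact hω
      · show l * (k:ℝ) = ω
        rw [mul_comm]; exact hk.symm
    · rintro ⟨s, hs, rfl⟩
      exact hs
end

section
/- If the minimal generating set G(Ω) = Ω* \ (Ω* + Ω*) of an ω-monoid Ω is infinite, then Ω is a tempered monoid, i.e., its increasing enumeration (a_n) satisfies a(n+1) − a(n) → 0. -/
open Filter Topology Pointwise

/-- If the minimal generating set of an ω-monoid is infinite, then it is a tempered
monoid. -/
theorem infinite_minimal_generating_set_tempered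
    (Ω : Set ℝ) (a : ℕ → ℝ)
    (hadd : ∀ x ∈ Ω, ∀ y ∈ Ω, x + y ∈ Ω)
    (hmono : StrictMono a) (h0 : a 0 = 0) (hrange : Set.range a = Ω)
    (hinf : ((Ω \ {0}) \ ((Ω \ {0}) + (Ω \ {0}))).Infinite) :
    Tendsto (fun n => a (n + 1) - a n) atTop (𝓝 0) := by
  have hΩ0 : (0:ℝ) ∈ Ω := by
    rw [← hrange]; exact ⟨0, h0⟩
  set p := a 1 with hp
  have hppos : 0 < p := by
    have := hmono (Nat.zero_lt_one)
    rwa [h0] at this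
  have hpΩ : p ∈ Ω := by rw [← hrange]; exact ⟨1, rfl⟩
  have hnn : ∀ x ∈ Ω, 0 ≤ x := by
    intro x hx
    rw [← hrange] at hx
    obtain ⟨i, rfl⟩ := hx
    have := hmono.monotone (Nat.zero_le i)
    linarith [this, h0.symm.le]
  have hsmul : ∀ (n : ℕ), ∀ x ∈ Ω, (n:ℝ) * x ∈ Ω := by
    intro n
    induction n with
    | zero => intro x hx; simpa using hΩ0
    | succ k ih =>
      intro x hx
      have : ((k+1:ℕ):ℝ) * x = (k:ℝ) * x + x := by push_cast; ring
      rw [this]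
      exact hadd _ (ih x hx) _ hx
  have hnext : ∀ (n : ℕ) (x : ℝ), x ∈ Ω → a n < x → a (n+1) ≤ x := by
    intro n x hx hlt
    rw [← hrange] at hx
    obtain ⟨m, rfl⟩ := hx
    have : n < m := hmono.lt_iff_lt.mp hlt
    exact hmono.monotone this
  have hunbdd : ∀ R : ℝ, ∃ N : ℕ, ∀ m, N ≤ m → R < a m := by
    intro R
    obtain ⟨n, hn⟩ := exists_nat_gt (R / p)
    have hRn : R < (n:ℝ) * p := by
      rw [div_lt_iff₀ hppos] at hn; linarith
    have : (n:ℝ) * p ∈ Ω := hsmul n p hpΩ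
    rw [← hrange] at this
    obtain ⟨N, hN⟩ := this
    exact ⟨N, fun m hm => lt_of_lt_of_le (hN ▸ hRn) (hmono.monotone hm)⟩
  -- key: arbitrarily close pairs in Ω
  have key : ∀ ε : ℝ, 0 < ε → ∃ u v, u ∈ Ω ∧ v ∈ Ω ∧ 0 < u ∧ 0 < v - u ∧ v - u < ε := by
    intro ε hε
    obtain ⟨M, hM⟩ := exists_nat_gt (p / ε)
    have hMpos : (0:ℝ) < M := lt_of_le_of_lt (div_nonneg hppos.le hε.le) hM
    set F : ℝ → ℝ := fun g => Int.fract (g / p) with hF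
    set f : ℝ → ℤ := fun g => ⌊F g * M⌋ with hf
    have hmaps : Set.MapsTo f ((Ω \ {0}) \ ((Ω \ {0}) + (Ω \ {0}))) (Set.Ico (0:ℤ) M) := by
      intro g _
      constructor
      · exact Int.floor_nonneg.mpr (mul_nonneg (Int.fract_nonneg _) hMpos.le)
      · have h1 : F g * M < M := by
          have h2 := Int.fract_lt_one (g / p)
          have h3 := Int.fract_nonneg (g / p)
          simp only [hF]
          nlinarith
        refine Int.floor_lt.mpr ?_
        push_cast
        exact h1
    obtain ⟨g, hg, g', hg', hne, hfe⟩ :=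
      hinf.exists_ne_map_eq_of_mapsTo hmaps (Set.finite_Ico _ _)
    have hgpos : 0 < g := by
      rcases hg with ⟨⟨hgΩ, hg0⟩, -⟩
      exact lt_of_le_of_ne (hnn g hgΩ) (fun h => hg0 h.symm)
    have hg'pos : 0 < g' := by
      rcases hg' with ⟨⟨hgΩ, hg0⟩, -⟩
      exact lt_of_le_of_ne (hnn g' hgΩ) (fun h => hg0 h.symm)
    set k : ℤ := ⌊g' / p⌋ - ⌊g / p⌋ with hk
    set r : ℝ := g' - g - (k:ℝ) * p with hr
    have hrval : r = p * (F g' - F g) := by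
      simp only [hr, hF, Int.fract, hk]
      push_cast
      field_simp
      ring
    have hfl : |F g' * M - F g * M| < 1 := by
      have a1 := Int.floor_le (F g' * (M:ℝ))
      have a2 := Int.lt_floor_add_one (F g' * (M:ℝ))
      have b1 := Int.floor_le (F g * (M:ℝ))
      have b2 := Int.lt_floor_add_one (F g * (M:ℝ))
      have hfe' : (⌊F g * (M:ℝ)⌋ : ℝ) = (⌊F g' * (M:ℝ)⌋ : ℝ) := by
        simp only [hf] at hfe
        exact_mod_cast hfe
      rw [abs_lt]
      constructor <;> linarith
    have hdM : |F g' - F g| * M < 1 := by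
      have h1 : |(F g' - F g) * M| < 1 := by rw [sub_mul]; exact hfl
      rwa [abs_mul, abs_of_nonneg hMpos.le] at h1
    have hrabs : |r| < ε := by
      rw [hrval, abs_mul, abs_of_pos hppos]
      have hpM : p < M * ε := by rwa [div_lt_iff₀ hε] at hM
      nlinarith [abs_nonneg (F g' - F g)]
    -- r ≠ 0
    have hkmul : ∀ (x y : ℝ) (j : ℤ), x ∈ (Ω \ {0}) \ ((Ω \ {0}) + (Ω \ {0})) →
        y ∈ Ω \ {0} → 0 < j → x ≠ y + (j:ℝ) * p := by
      intro x y j hx hy hj hxy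
      have hjp : (j:ℝ) * p ∈ Ω \ {0} := by
        constructor
        · have h1 := hsmul j.toNat p hpΩ
          have h2 : ((j.toNat : ℕ) : ℝ) = (j : ℝ) := by
            rw [← Int.cast_natCast, Int.toNat_of_nonneg hj.le]
          rwa [h2] at h1
        · simp only [Set.mem_singleton_iff]
          have : (0:ℝ) < (j:ℝ) * p := by
            have : (0:ℝ) < (j:ℝ) := by exact_mod_cast hj
            positivity
          exact ne_of_gt this
      exact hx.2 (hxy ▸ Set.add_mem_add hy hjp)
    have hr0 : r ≠ 0 := by
      intro h
      have hgg : g' = g + (k:ℝ) * p := by simp only [hr] at h; linarith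
      rcases lt_trichotomy k 0 with hkneg | hk0 | hkpos
      · have : g = g' + ((-k:ℤ):ℝ) * p := by push_cast; push_cast at hgg; linarith
        exact hkmul g g' (-k) hg hg'.1 (by omega) this
      · apply hne
        rw [hgg, hk0]; simp
      · exact hkmul g' g k hg' hg.1 hkpos hgg
    -- build u, v
    have pair : ∀ (x y : ℝ) (j : ℤ), x ∈ Ω → y ∈ Ω → 0 < x →
        0 < y - x - (j:ℝ) * p → y - x - (j:ℝ) * p < ε →
        ∃ u v, u ∈ Ω ∧ v ∈ Ω ∧ 0 < u ∧ 0 < v - u ∧ v - u < ε := by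
      intro x y j hx hy hx0 hpos hlt
      refine ⟨x + ((j.toNat:ℕ):ℝ) * p, y + (((-j).toNat:ℕ):ℝ) * p,
        hadd _ hx _ (hsmul _ _ hpΩ), hadd _ hy _ (hsmul _ _ hpΩ), ?_, ?_, ?_⟩
      · have : (0:ℝ) ≤ ((j.toNat:ℕ):ℝ) * p := by positivity
        linarith
      all_goals {
        have hc : ((j.toNat : ℕ) : ℝ) - (((-j).toNat : ℕ) : ℝ) = (j : ℝ) := by
          have : (j.toNat : ℤ) - ((-j).toNat : ℤ) = j := by omega
          exact_mod_cast this
        nlinarith [hc]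
      }
    rcases lt_trichotomy r 0 with hrneg | hr0' | hrpos
    · refine pair g' g (-k) hg'.1.1 hg.1.1 hg'pos ?_ ?_
      · push_cast; simp only [hr] at hrneg ⊢; linarith
      · push_cast
        have := abs_lt.mp hrabs
        simp only [hr] at this ⊢; linarith [this.1]
    · exact absurd hr0' hr0
    · refine pair g g' k hg.1.1 hg'.1.1 hgpos hrpos ?_
      have := abs_lt.mp hrabs
      linarith [this.2]
  -- conclude
  rw [Metric.tendsto_atTop]
  intro ε hε
  obtain ⟨u, v, hu, hv, hu0, hη0, hηε⟩ := key ε hε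
  set η := v - u with hηdef
  obtain ⟨N, hN⟩ := hunbdd (u * (u + η) / η)
  refine ⟨N, fun n hn => ?_⟩
  have ht : u * (u + η) / η < a n := hN n hn
  set t := a n with htdef
  have htpos : 0 < t := lt_of_le_of_lt (by positivity) ht
  set m := ⌊t / u⌋₊ with hmdef
  have hmu : (m:ℝ) * u ≤ t := by
    have h1 : (m:ℝ) ≤ t / u := Nat.floor_le (le_of_lt (div_pos htpos hu0))
    rwa [le_div_iff₀ hu0] at h1
  have h2 : t < ((m:ℝ) + 1) * u := by
    have h1 : t / u < (m:ℝ) + 1 := Nat.lt_floor_add_one _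
    rwa [div_lt_iff₀ hu0] at h1
  have h5 : u * (u + η) < t * η := (div_lt_iff₀ hη0).mp ht
  have h4 : u < (m:ℝ) * η := by
    have hq : u * u < ((m:ℝ) * η) * u := by nlinarith
    exact lt_of_mul_lt_mul_right hq hu0.le
  have hmu2 : t < (m:ℝ) * u + (m:ℝ) * η := by nlinarith
  set j : ℕ := ⌊(t - (m:ℝ) * u) / η⌋₊ with hjdef
  have hj0le : (j:ℝ) * η ≤ t - (m:ℝ) * u := by
    have h1 : (j:ℝ) ≤ (t - (m:ℝ) * u) / η :=
      Nat.floor_le (div_nonneg (by linarith) hη0.le)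
    rwa [le_div_iff₀ hη0] at h1
  have hj0lt : t - (m:ℝ) * u < ((j:ℝ) + 1) * η := by
    have h1 : (t - (m:ℝ) * u) / η < (j:ℝ) + 1 := Nat.lt_floor_add_one _
    rwa [div_lt_iff₀ hη0] at h1
  have hjm : j + 1 ≤ m := by
    have h1 : (j:ℝ) * η < (m:ℝ) * η := by nlinarith
    have h2' : (j:ℝ) < (m:ℝ) := lt_of_mul_lt_mul_right h1 hη0.le
    exact_mod_cast Nat.succ_le_of_lt (by exact_mod_cast h2')
  set x : ℝ := ((m - (j+1) : ℕ):ℝ) * u + ((j+1:ℕ):ℝ) * v with hxdef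
  have hxΩ : x ∈ Ω := hadd _ (hsmul _ _ hu) _ (hsmul _ _ hv)
  have hxval : x = (m:ℝ) * u + ((j:ℝ) + 1) * η := by
    have hcast : ((m - (j+1) : ℕ):ℝ) = (m:ℝ) - ((j+1:ℕ):ℝ) := by
      exact Nat.cast_sub hjm
    rw [hxdef, hcast, hηdef]
    push_cast
    ring
  have htx : t < x := by rw [hxval]; linarith
  have hxt : x ≤ t + η := by rw [hxval]; linarith
  have hstep : a (n+1) ≤ x := hnext n x hxΩ htx
  have hge : a n ≤ a (n+1) := (hmono (Nat.lt_succ_self n)).le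
  rw [Real.dist_eq, sub_zero, abs_of_nonneg (by linarith)]
  have : a (n+1) - a n ≤ η := by
    have : a (n+1) ≤ t + η := le_trans hstep hxt
    simp only [htdef] at this ⊢
    linarith
  linarith
end

section
/- Let Ω be an ω-monoid with at least one nonzero element whose minimal generating set G(Ω) = Ω* \ (Ω* + Ω*) is finite and commensurable (λ/μ ∈ ℚ for all λ, μ ∈ G(Ω)). Then there exists a real number α > 0 such that α·Ω ⊆ ℕ; consequently Ω is a positive scalar multiple of a numerical semigroup. -/
open Pointwise

/-- Bezout over ℤ for finsets. -/
lemma finset_gcd_bezout {ι : Type*} [DecidableEq ι] (t : Finset ι) (f : ι → ℤ) :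
    ∃ c : ι → ℤ, (t.gcd f : ℤ) = ∑ i ∈ t, c i * f i := by
  induction t using Finset.induction with
  | empty => exact ⟨0, by simp⟩
  | @insert a s ha ih =>
    obtain ⟨c, hc⟩ := ih
    refine ⟨fun i => if i = a then Int.gcdA (f a) (s.gcd f)
      else Int.gcdB (f a) (s.gcd f) * c i, ?_⟩
    have hsum : ∑ i ∈ s, (if i = a then Int.gcdA (f a) (s.gcd f)
        else Int.gcdB (f a) (s.gcd f) * c i) * f i
        = Int.gcdB (f a) (s.gcd f) * s.gcd f := by
      rw [hc, Finset.mul_sum]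
      refine Finset.sum_congr rfl fun i hi => ?_
      rw [if_neg (by rintro rfl; exact ha hi)]
      ring
    rw [Finset.gcd_insert, ← Int.coe_gcd, Int.gcd_eq_gcd_ab, Finset.sum_insert ha]
    beta_reduce
    rw [if_pos rfl, hsum]
    ring

/-- Casting a finset gcd from ℕ to ℤ. -/
lemma finset_gcd_cast {ι : Type*} (t : Finset ι) (f : ι → ℕ) :
    ((t.gcd f : ℕ) : ℤ) = t.gcd (fun i => (f i : ℤ)) := by
  classical
  induction t using Finset.induction with
  | empty => simp
  | @insert a s ha ih =>
    rw [Finset.gcd_insert, Finset.gcd_insert, ← ih, ← Int.coe_gcd,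
      Int.gcd_natCast_natCast]
    rfl

/-- A subset of ℕ containing 0, closed under addition, containing a finite
set with gcd 1, has finite complement. -/
lemma compl_finite_of_gcd_one (S : Set ℕ) (h0 : 0 ∈ S)
    (hadd : ∀ x ∈ S, ∀ y ∈ S, x + y ∈ S)
    (F : Finset ℕ) (hF : ∀ n ∈ F, n ∈ S) (hgcd : F.gcd id = 1) :
    Sᶜ.Finite := by
  classical
  have hmul : ∀ (n k : ℕ), k ∈ S → n * k ∈ S := by
    intro n k hk
    induction n with
    | zero => simpa using h0
    | succ m ih => rw [Nat.succ_mul]; exact hadd _ ih _ hk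
  obtain ⟨c, hc⟩ := finset_gcd_bezout F (fun n => (n : ℤ))
  rw [← finset_gcd_cast] at hc
  have hgcd' : (F.gcd fun n : ℕ => n) = 1 := hgcd
  rw [hgcd'] at hc
  set p : ℕ := ∑ i ∈ F, (c i).toNat * i with hp
  set q : ℕ := ∑ i ∈ F, (-(c i)).toNat * i with hq
  have hpq : (p : ℤ) - (q : ℤ) = 1 := by
    have hstep : (p : ℤ) - (q : ℤ) = ∑ i ∈ F, c i * (i : ℤ) := by
      rw [hp, hq]
      push_cast
      rw [← Finset.sum_sub_distrib]
      refine Finset.sum_congr rfl fun i _ => ?_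
      have h : ((c i).toNat : ℤ) - ((-(c i)).toNat : ℤ) = c i := by omega
      rw [← sub_mul, h]
    rw [hstep, ← hc]
    norm_num
  have hpS : p ∈ S := by
    rw [hp]
    refine Finset.sum_induction _ (· ∈ S) (fun x y hx hy => hadd x hx y hy) h0 ?_
    exact fun i hi => hmul _ _ (hF i hi)
  have hqS : q ∈ S := by
    rw [hq]
    refine Finset.sum_induction _ (· ∈ S) (fun x y hx hy => hadd x hx y hy) h0 ?_
    exact fun i hi => hmul _ _ (hF i hi)
  have hp1 : p = q + 1 := by omega
  rw [hp1] at hpS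
  have hbig : ∀ n : ℕ, q * q ≤ n → n ∈ S := by
    intro n hn
    rcases Nat.eq_zero_or_pos q with hq0 | hq0
    · rw [hq0] at hpS
      simpa using hmul n 1 (by simpa using hpS)
    · set k := n / q with hk
      set r := n % q with hr
      have hrq : r < q := Nat.mod_lt _ hq0
      have hkq : q ≤ k := by
        rw [hk]
        exact Nat.le_div_iff_mul_le hq0 |>.mpr (by nlinarith)
      have hkr : r ≤ k := le_of_lt (lt_of_lt_of_le hrq hkq)
      have hne : n = (k - r) * q + r * (q + 1) := by
        have h1 : q * k + r = n := Nat.div_add_mod n q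
        have h2 : k - r + r = k := Nat.sub_add_cancel hkr
        nlinarith [Nat.sub_add_cancel hkr]
      rw [hne]
      exact hadd _ (hmul _ _ hqS) _ (hmul _ _ hpS)
  apply Set.Finite.subset (Set.finite_Iio (q * q))
  intro n hn
  simp only [Set.mem_compl_iff] at hn
  by_contra h
  exact hn (hbig n (le_of_not_gt h))

/-- An ω-monoid with a nonzero element whose minimal generating set is finite and
commensurable can be rescaled into `ℕ`; consequently it is a positive scalar multiple of
a numerical semigroup. -/
theorem finite_commensurable_generating_set_scaled_numerical_semigroup
    (Ω : Set ℝ) (a : ℕ → ℝ)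
    (hadd : ∀ x ∈ Ω, ∀ y ∈ Ω, x + y ∈ Ω)
    (hmono : StrictMono a) (h0 : a 0 = 0) (hrange : Set.range a = Ω)
    (hne : ∃ x ∈ Ω, x ≠ 0)
    (hfin : ((Ω \ {0}) \ ((Ω \ {0}) + (Ω \ {0}))).Finite)
    (hcomm : ∀ l ∈ (Ω \ {0}) \ ((Ω \ {0}) + (Ω \ {0})),
      ∀ m ∈ (Ω \ {0}) \ ((Ω \ {0}) + (Ω \ {0})),
        l ≠ 0 → m ≠ 0 → ∃ q : ℚ, l / m = (q : ℝ)) :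
    (∃ α : ℝ, 0 < α ∧ ∀ x ∈ Ω, ∃ n : ℕ, α * x = (n : ℝ)) ∧
      ∃ l : ℝ, 0 < l ∧ ∃ S : Set ℕ,
        (0 ∈ S ∧ (∀ x ∈ S, ∀ y ∈ S, x + y ∈ S) ∧ Sᶜ.Finite) ∧
        Ω = (fun s : ℕ => l * (s : ℝ)) '' S := by
  classical
  set G : Set ℝ := (Ω \ {0}) \ ((Ω \ {0}) + (Ω \ {0})) with hGdef
  have hzeroΩ : (0 : ℝ) ∈ Ω := by rw [← hrange]; exact ⟨0, h0⟩
  have hnonneg : ∀ x ∈ Ω, 0 ≤ x := by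
    intro x hx
    rw [← hrange] at hx
    obtain ⟨n, rfl⟩ := hx
    calc (0 : ℝ) = a 0 := h0.symm
    _ ≤ a n := hmono.monotone (Nat.zero_le n)
  have hpos : ∀ x ∈ Ω \ {0}, 0 < x := fun x hx =>
    (hnonneg x hx.1).lt_of_ne (Ne.symm hx.2)
  -- every nonzero element is generated by G
  have hgen : ∀ x ∈ Ω \ ({0} : Set ℝ), x ∈ AddSubmonoid.closure G := by
    have key : ∀ n : ℕ, a n ∈ Ω \ ({0} : Set ℝ) → a n ∈ AddSubmonoid.closure G := by
      intro n
      induction n using Nat.strong_induction_on with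
      | _ n ih =>
        intro hn
        by_cases hg : a n ∈ G
        · exact AddSubmonoid.subset_closure hg
        · have hsum : a n ∈ (Ω \ {0}) + (Ω \ {0}) := by
            rw [hGdef, Set.mem_diff] at hg
            tauto
          obtain ⟨y, hy, z, hz, hyz⟩ := Set.mem_add.mp hsum
          have hy' : y ∈ Set.range a := by rw [hrange]; exact hy.1
          have hz' : z ∈ Set.range a := by rw [hrange]; exact hz.1
          obtain ⟨i, rfl⟩ := hy'
          obtain ⟨j, rfl⟩ := hz'
          have hilt : i < n := by
            rw [← hmono.lt_iff_lt]
            have := hpos _ hz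
            linarith
          have hjlt : j < n := by
            rw [← hmono.lt_iff_lt]
            have := hpos _ hy
            linarith
          have h1 := ih i hilt hy
          have h2 := ih j hjlt hz
          rw [← hyz]
          exact AddSubmonoid.add_mem _ h1 h2
    intro x hx
    have : x ∈ Set.range a := by rw [hrange]; exact hx.1
    obtain ⟨n, rfl⟩ := this
    exact key n hx
  -- pick g₀ ∈ G
  obtain ⟨x0, hx0Ω, hx0⟩ := hne
  have hx0' : x0 ∈ Ω \ ({0} : Set ℝ) := ⟨hx0Ω, hx0⟩
  have hGne : G.Nonempty := by
    by_contra hGe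
    rw [Set.not_nonempty_iff_eq_empty] at hGe
    have := hgen x0 hx0'
    rw [hGe, AddSubmonoid.closure_empty] at this
    exact hx0 (by simpa using this)
  obtain ⟨g₀, hg₀⟩ := hGne
  have hg₀pos : 0 < g₀ := hpos _ hg₀.1
  -- rational quotients
  have hq : ∀ g ∈ G, ∃ r : ℚ, g / g₀ = (r : ℝ) := fun g hg =>
    hcomm g hg g₀ hg₀ (ne_of_gt (hpos _ hg.1)) (ne_of_gt hg₀pos)
  set qf : ℝ → ℚ := fun g => if h : ∃ r : ℚ, g / g₀ = (r : ℝ) then h.choose else 1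
    with hqf
  have hqfspec : ∀ g ∈ G, g / g₀ = (qf g : ℝ) := by
    intro g hg
    rw [hqf]
    simp only
    rw [dif_pos (hq g hg)]
    exact (hq g hg).choose_spec
  set tG := hfin.toFinset with htG
  set N : ℕ := ∏ g ∈ tG, (qf g).den with hN
  have hNpos : 0 < N := Finset.prod_pos fun g _ => (qf g).pos
  set α₀ : ℝ := (N : ℝ) / g₀ with hα₀
  have hα₀pos : 0 < α₀ := div_pos (by exact_mod_cast hNpos) hg₀pos
  -- rescaling sends generators to ℕ
  have nval : ∀ g ∈ G, ∃ n : ℕ, α₀ * g = (n : ℝ) := by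
    intro g hg
    have hden : (qf g).den ∣ N := Finset.dvd_prod_of_mem _ (hfin.mem_toFinset.mpr hg)
    obtain ⟨m, hm⟩ := hden
    have hqpos : 0 < qf g := by
      have h1 : (0 : ℝ) < g / g₀ := div_pos (hpos _ hg.1) hg₀pos
      rw [hqfspec g hg] at h1
      exact_mod_cast h1
    have hnum : 0 < (qf g).num := Rat.num_pos.mpr hqpos
    refine ⟨m * (qf g).num.toNat, ?_⟩
    have hQ : (N : ℚ) * qf g = ((m * (qf g).num.toNat : ℕ) : ℚ) := by
      have hnumden : (qf g) * ((qf g).den : ℚ) = (qf g).num := Rat.mul_den_eq_num _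
      have htn : (((qf g).num.toNat : ℕ) : ℚ) = ((qf g).num : ℚ) := by
        rw [← Int.cast_natCast, Int.toNat_of_nonneg (le_of_lt hnum)]
      rw [hm]
      push_cast
      rw [htn, ← hnumden]
      ring
    have : α₀ * g = (N : ℝ) * (qf g : ℝ) := by
      rw [hα₀, div_mul_eq_mul_div, mul_div_assoc, hqfspec g hg]
    rw [this]
    exact_mod_cast congrArg (fun q : ℚ => (q : ℝ)) hQ
  set hv : ℝ → ℕ := fun g => if h : ∃ n : ℕ, α₀ * g = (n : ℝ) then h.choose else 0
    with hhv
  have hvspec : ∀ g ∈ G, α₀ * g = (hv g : ℝ) := by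
    intro g hg
    rw [hhv]
    simp only
    rw [dif_pos (nval g hg)]
    exact (nval g hg).choose_spec
  have hvg₀ : hv g₀ = N := by
    have h1 : α₀ * g₀ = (N : ℝ) := by
      rw [hα₀]; field_simp
    have h2 := hvspec g₀ hg₀
    have : (hv g₀ : ℝ) = (N : ℝ) := by rw [← h2, h1]
    exact_mod_cast this
  set d : ℕ := tG.gcd hv with hd
  have hdpos : 0 < d := by
    rcases Nat.eq_zero_or_pos d with h | h
    · exfalso
      rw [hd, Finset.gcd_eq_zero_iff] at h
      have := h g₀ (hfin.mem_toFinset.mpr hg₀)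
      omega
    · exact h
  have hddvd : ∀ g ∈ G, d ∣ hv g := fun g hg =>
    Finset.gcd_dvd (hfin.mem_toFinset.mpr hg)
  -- every element of the closure maps to a multiple of d
  have hdiv : ∀ x ∈ AddSubmonoid.closure G, ∃ n : ℕ, α₀ * x = ((d * n : ℕ) : ℝ) := by
    intro x hx
    refine AddSubmonoid.closure_induction ?_ ?_ ?_ hx
    · intro g hg
      refine ⟨hv g / d, ?_⟩
      rw [Nat.mul_div_cancel' (hddvd g hg)]
      exact hvspec g hg
    · exact ⟨0, by simp⟩
    · rintro x y hx' hy' ⟨n, hn⟩ ⟨m, hm⟩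
      refine ⟨n + m, ?_⟩
      push_cast at hn hm ⊢
      rw [mul_add, hn, hm]
      ring
  set α : ℝ := α₀ / d with hα
  have hdR : (d : ℝ) ≠ 0 := by exact_mod_cast hdpos.ne'
  have hαpos : 0 < α := div_pos hα₀pos (by exact_mod_cast hdpos)
  have hαΩ : ∀ x ∈ Ω, ∃ n : ℕ, α * x = (n : ℝ) := by
    intro x hx
    by_cases hx0 : x = 0
    · exact ⟨0, by simp [hx0]⟩
    · obtain ⟨n, hn⟩ := hdiv x (hgen x ⟨hx, hx0⟩)
      refine ⟨n, ?_⟩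
      rw [hα]
      push_cast at hn
      field_simp
      rw [hn]
  set l : ℝ := (d : ℝ) / α₀ with hl
  have hlpos : 0 < l := div_pos (by exact_mod_cast hdpos) hα₀pos
  have hlα : l * α = 1 := by
    rw [hl, hα]
    field_simp
  have hlinv : ∀ r : ℝ, l * (α * r) = r := by
    intro r
    rw [← mul_assoc, hlα, one_mul]
  set S : Set ℕ := {n : ℕ | l * (n : ℝ) ∈ Ω} with hS
  have h0S : 0 ∈ S := by
    rw [hS]; simp [hzeroΩ]
  have haddS : ∀ x ∈ S, ∀ y ∈ S, x + y ∈ S := by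
    intro x hx y hy
    rw [hS, Set.mem_setOf_eq]
    push_cast
    rw [mul_add]
    exact hadd _ hx _ hy
  -- the finite generating set inside S
  have hFS : ∀ n ∈ tG.image (fun g => hv g / d), n ∈ S := by
    intro n hn
    rw [Finset.mem_image] at hn
    obtain ⟨g, hgG, rfl⟩ := hn
    have hgG' : g ∈ G := hfin.mem_toFinset.mp hgG
    have hαg : α * g = ((hv g / d : ℕ) : ℝ) := by
      have h1 := hvspec g hgG'
      have h2 : (hv g : ℝ) = ((d : ℕ) : ℝ) * ((hv g / d : ℕ) : ℝ) := by
        rw [← Nat.cast_mul, Nat.mul_div_cancel' (hddvd g hgG')]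
      rw [hα]
      rw [div_mul_eq_mul_div, h1, h2]
      field_simp
    rw [hS, Set.mem_setOf_eq, ← hαg, hlinv]
    exact hgG'.1.1
  have hFgcd : (tG.image (fun g => hv g / d)).gcd id = 1 := by
    rw [Finset.gcd_image]
    have h1 := Finset.gcd_div_eq_one (f := hv) (hfin.mem_toFinset.mpr hg₀)
      (by rw [hvg₀]; omega)
    rw [← hd] at h1
    exact h1
  have hScompl : Sᶜ.Finite :=
    compl_finite_of_gcd_one S h0S haddS _ hFS hFgcd
  have himg : Ω = (fun s : ℕ => l * (s : ℝ)) '' S := by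
    ext x
    constructor
    · intro hx
      obtain ⟨n, hn⟩ := hαΩ x hx
      have hx' : x = l * n := by rw [← hn, ← mul_assoc, hlα, one_mul]
      refine ⟨n, ?_, hx'.symm⟩
      rw [hS, Set.mem_setOf_eq, ← hx']
      exact hx
    · rintro ⟨n, hn, rfl⟩
      exact hn
  exact ⟨⟨α, hαpos, hαΩ⟩, l, hlpos, S, ⟨h0S, haddS, hScompl⟩, himg⟩
end

section
/- Let Ω be an ω-monoid with smallest nonzero element 1 (normalized) and increasing enumeration (a_n), and suppose its footprint Δ contains an element δ with 0 < δ < 1. Then there exists N such that a(n+1) − a(n) ≤ δ for all n ≥ N. In particular, if Ω is not tempered with gap constant ε (i.e., for every n there exists N > n with a(N+1) − a(N) > ε), then Δ ∩ (0, ε) = ∅. -/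
/-- For a normalized ω-monoid whose footprint contains `δ` with `0 < δ < 1`, the gaps are
eventually at most `δ`; in particular, if the monoid is not tempered with gap constant
`ε`, then the footprint avoids `(0, ε)`. -/
theorem footprint_small_element_eventual_gap_bound
    (Ω : Set ℝ) (a : ℕ → ℝ)
    (hadd : ∀ x ∈ Ω, ∀ y ∈ Ω, x + y ∈ Ω)
    (hmono : StrictMono a) (h0 : a 0 = 0) (hrange : Set.range a = Ω)
    (hone : 1 ∈ Ω) (hnorm : ∀ x ∈ Ω, x ≠ 0 → 1 ≤ x) :
    (∀ δ ∈ Int.fract '' Ω, 0 < δ → δ < 1 →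
      ∃ N : ℕ, ∀ n ≥ N, a (n + 1) - a n ≤ δ) ∧
    ∀ ε : ℝ, (∀ n : ℕ, ∃ N : ℕ, N > n ∧ a (N + 1) - a N > ε) →
      Int.fract '' Ω ∩ Set.Ioo 0 ε = ∅ := by
  have h0' : (0:ℝ) ∈ Ω := hrange ▸ ⟨0, h0⟩
  have hnat : ∀ j : ℕ, (j : ℝ) ∈ Ω := by
    intro j
    induction j with
    | zero => simpa using h0'
    | succ n ih => push_cast; exact hadd _ ih _ hone
  have hmain : ∀ δ ∈ Int.fract '' Ω, 0 < δ → δ < 1 →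
      ∃ N : ℕ, ∀ n ≥ N, a (n + 1) - a n ≤ δ := by
    rintro δ ⟨x, hx, rfl⟩ hδ0 hδ1
    have hx0 : x ≠ 0 := by
      intro h; rw [h, Int.fract_zero] at hδ0; exact lt_irrefl 0 hδ0
    have hx1 : (1:ℝ) ≤ x := hnorm x hx hx0
    set m : ℤ := ⌊x⌋ with hm
    have hm1 : (1:ℤ) ≤ m := Int.le_floor.2 (by exact_mod_cast hx1)
    have hxm : x = (m:ℝ) + Int.fract x := (Int.floor_add_fract x).symm
    obtain ⟨K, hK⟩ := exists_nat_ge (1 / Int.fract x)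
    have hkx : ∀ k : ℕ, (k:ℝ) * x ∈ Ω := by
      intro k
      induction k with
      | zero => simpa using h0'
      | succ n ih => push_cast; rw [add_mul, one_mul]; exact hadd _ ih _ hx
    have hmem : ∀ k j : ℕ, (k:ℝ) * x + (j:ℝ) ∈ Ω := fun k j => hadd _ (hkx k) _ (hnat j)
    -- key: beyond K*m, every interval (t, t+δ] meets Ω
    have key : ∀ t : ℝ, (K:ℝ) * (m:ℝ) ≤ t →
        ∃ y ∈ Ω, t < y ∧ y ≤ t + Int.fract x := by
      intro t ht
      have hf0 : 0 ≤ Int.fract t := Int.fract_nonneg t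
      have hf1 : Int.fract t < 1 := Int.fract_lt_one t
      set k : ℕ := ⌊Int.fract t / Int.fract x⌋₊ + 1 with hk
      have hdivnn : 0 ≤ Int.fract t / Int.fract x := div_nonneg hf0 hδ0.le
      have hfloor_le : (⌊Int.fract t / Int.fract x⌋₊ : ℝ) ≤ Int.fract t / Int.fract x :=
        Nat.floor_le hdivnn
      have hlt_floor : Int.fract t / Int.fract x < (⌊Int.fract t / Int.fract x⌋₊ : ℝ) + 1 :=
        Nat.lt_floor_add_one _
      have hk1 : Int.fract t < (k:ℝ) * Int.fract x := by
        have : Int.fract t / Int.fract x < (k:ℝ) := by push_cast [hk]; linarith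
        calc Int.fract t = Int.fract t / Int.fract x * Int.fract x := by
              field_simp
          _ < (k:ℝ) * Int.fract x := by
              exact mul_lt_mul_of_pos_right this hδ0
      have hk2 : (k:ℝ) * Int.fract x ≤ Int.fract t + Int.fract x := by
        have : (k:ℝ) * Int.fract x = ((⌊Int.fract t / Int.fract x⌋₊:ℝ)) * Int.fract x
            + Int.fract x := by push_cast [hk]; ring
        rw [this]
        have := mul_le_mul_of_nonneg_right hfloor_le hδ0.le
        rw [div_mul_cancel₀ _ hδ0.ne'] at this
        linarith
      have hkK : k ≤ K := by
        have hKδ : 1 ≤ (K:ℝ) * Int.fract x := by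
          rw [div_le_iff₀ hδ0] at hK; linarith
        have hfl : (⌊Int.fract t / Int.fract x⌋₊ : ℝ) * Int.fract x ≤ Int.fract t := by
          have := mul_le_mul_of_nonneg_right hfloor_le hδ0.le
          rwa [div_mul_cancel₀ _ hδ0.ne'] at this
        have h1 : (⌊Int.fract t / Int.fract x⌋₊ : ℝ) < (K:ℝ) := by nlinarith
        have : (⌊Int.fract t / Int.fract x⌋₊ : ℕ) < K := by exact_mod_cast h1
        omega
      -- the integer offset
      have htfloor : ((K:ℤ) * m : ℤ) ≤ ⌊t⌋ := by
        rw [Int.le_floor]; push_cast; exact ht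
      have hkm_le : ((k:ℤ) * m : ℤ) ≤ ⌊t⌋ := by
        refine le_trans ?_ htfloor
        have : (k:ℤ) ≤ (K:ℤ) := by exact_mod_cast hkK
        nlinarith
      set j : ℤ := ⌊t⌋ - (k:ℤ) * m with hj
      have hj0 : 0 ≤ j := by omega
      have hjcast : ((j.toNat : ℕ) : ℝ) = (j : ℝ) := by
        exact_mod_cast Int.toNat_of_nonneg hj0
      have hjr : ((j.toNat : ℕ) : ℝ) = (⌊t⌋ : ℝ) - (k:ℝ) * (m:ℝ) := by
        rw [hjcast, hj]; push_cast; ring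
      have hy : (k:ℝ) * x + (j.toNat : ℝ) = (⌊t⌋ : ℝ) + (k:ℝ) * Int.fract x := by
        rw [hjr]; linear_combination (k:ℝ) * hxm
      have hts : t = (⌊t⌋ : ℝ) + Int.fract t := (Int.floor_add_fract t).symm
      exact ⟨(k:ℝ) * x + (j.toNat : ℝ), hmem k j.toNat, by rw [hy]; linarith,
        by rw [hy]; linarith⟩
    obtain ⟨N, hN⟩ : ∃ N, a N = (K:ℝ) * x := by
      have := hkx K; rw [← hrange] at this; exact this
    refine ⟨N, fun n hn => ?_⟩
    have hKm : (K:ℝ) * (m:ℝ) ≤ a n := by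
      have h1 : a N ≤ a n := hmono.monotone hn
      have hmx : (m:ℝ) ≤ x := by rw [hxm]; linarith
      have h2 : (K:ℝ) * (m:ℝ) ≤ (K:ℝ) * x :=
        mul_le_mul_of_nonneg_left hmx (Nat.cast_nonneg K)
      linarith [hN ▸ h1]
    obtain ⟨y, hyΩ, hty, hyd⟩ := key (a n) hKm
    obtain ⟨p, rfl⟩ : ∃ p, a p = y := by rw [← hrange] at hyΩ; exact hyΩ
    have hpn : n < p := hmono.lt_iff_lt.1 hty
    have : a (n + 1) ≤ a p := hmono.monotone hpn
    linarith
  refine ⟨hmain, fun ε hε => ?_⟩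
  rw [Set.eq_empty_iff_forall_notMem]
  rintro δ ⟨hδΔ, hδ0, hδε⟩
  have hδ1 : δ < 1 := by
    obtain ⟨x, -, rfl⟩ := hδΔ
    exact Int.fract_lt_one x
  obtain ⟨N, hN⟩ := hmain δ hδΔ hδ0 hδ1
  obtain ⟨M, hMN, hgap⟩ := hε N
  have := hN M (le_of_lt hMN)
  linarith
end

section
/- Let Ω be an ω-monoid with smallest nonzero element 1 (normalized) and increasing enumeration (a_n), and suppose its footprint Δ contains an element of the form 1 − δ with 0 < δ < 1. Then there exists N such that a(n+1) − a(n) ≤ δ for all n ≥ N. In particular, if Ω is not tempered with gap constant ε (i.e., for every n there exists N > n with a(N+1) − a(N) > ε), then Δ ∩ (1 − ε, 1) = ∅. -/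
/-- For a normalized ω-monoid whose footprint contains `1 - δ` with `0 < δ < 1`, the gaps
are eventually at most `δ`; in particular, if the monoid is not tempered with gap
constant `ε`, then the footprint avoids `(1 - ε, 1)`. -/
theorem footprint_large_element_eventual_gap_bound
    (Ω : Set ℝ) (a : ℕ → ℝ)
    (hadd : ∀ x ∈ Ω, ∀ y ∈ Ω, x + y ∈ Ω)
    (hmono : StrictMono a) (h0 : a 0 = 0) (hrange : Set.range a = Ω)
    (hone : 1 ∈ Ω) (hnorm : ∀ x ∈ Ω, x ≠ 0 → 1 ≤ x) :
    (∀ δ : ℝ, 0 < δ → δ < 1 → (1 - δ) ∈ Int.fract '' Ω →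
      ∃ N : ℕ, ∀ n ≥ N, a (n + 1) - a n ≤ δ) ∧
    ∀ ε : ℝ, (∀ n : ℕ, ∃ N : ℕ, N > n ∧ a (N + 1) - a N > ε) →
      Int.fract '' Ω ∩ Set.Ioo (1 - ε) 1 = ∅ := by
  -- positive naturals belong to Ω
  have hnat : ∀ m : ℕ, 1 ≤ m → (m : ℝ) ∈ Ω := by
    intro m hm
    induction m with
    | zero => omega
    | succ k ih =>
      rcases Nat.eq_zero_or_pos k with hk | hk
      · subst hk; simpa using hone
      · have h := hadd _ (ih hk) _ hone
        push_cast
        exact h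
  -- a is nonnegative
  have h_nonneg : ∀ n, 0 ≤ a n := by
    intro n; rw [← h0]; exact hmono.monotone (Nat.zero_le n)
  -- a (n+1) is the least element of Ω above a n
  have h_next : ∀ n : ℕ, ∀ z ∈ Ω, a n < z → a (n + 1) ≤ z := by
    intro n z hz hlt
    rw [← hrange] at hz
    obtain ⟨m, rfl⟩ := hz
    have : n < m := hmono.lt_iff_lt.mp hlt
    exact hmono.monotone this
  -- a is eventually above any constant
  have h_unbd : ∀ C : ℝ, ∃ N : ℕ, ∀ n ≥ N, C ≤ a n := by
    intro C
    obtain ⟨p, hp⟩ := exists_nat_ge C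
    have hmem : ((max p 1 : ℕ) : ℝ) ∈ Ω := hnat _ (le_max_right _ _)
    rw [← hrange] at hmem
    obtain ⟨N, hN⟩ := hmem
    refine ⟨N, fun n hn => ?_⟩
    have h1 : C ≤ ((max p 1 : ℕ) : ℝ) := by
      refine le_trans hp ?_
      exact_mod_cast le_max_left p 1
    have h2 : a N ≤ a n := hmono.monotone hn
    linarith [hN ▸ h2]
  -- combinations j•x + m with m ≥ 1 belong to Ω
  have mem_comb : ∀ (x : ℝ), x ∈ Ω → ∀ (j m : ℕ), 1 ≤ m → (j : ℝ) * x + m ∈ Ω := by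
    intro x hx j m hm
    induction j with
    | zero => simpa using hnat m hm
    | succ i ih =>
      have h := hadd _ hx _ ih
      have e : ((i : ℝ) + 1) * x + m = x + ((i : ℝ) * x + m) := by ring
      push_cast
      rw [e]
      exact h
  -- main part
  have part1 : ∀ δ : ℝ, 0 < δ → δ < 1 → (1 - δ) ∈ Int.fract '' Ω →
      ∃ N : ℕ, ∀ n ≥ N, a (n + 1) - a n ≤ δ := by
    intro δ hδ0 hδ1 hmem
    obtain ⟨x, hxΩ, hxf⟩ := hmem
    have hxne : x ≠ 0 := by
      intro h; rw [h] at hxf; simp [Int.fract_zero] at hxf; linarith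
    have hx1 : 1 ≤ x := hnorm x hxΩ hxne
    set k : ℤ := ⌊x⌋ with hk
    have hxk : x = (k : ℝ) + (1 - δ) := by
      have := Int.floor_add_fract x
      rw [hxf] at this
      linarith
    set J : ℕ := ⌈1 / δ⌉₊ with hJ
    obtain ⟨N, hN⟩ := h_unbd ((J : ℝ) * x)
    refine ⟨N, fun n hn => ?_⟩
    set t := a n with ht
    have htJ : (J : ℝ) * x ≤ t := hN n hn
    set u := Int.fract t with hu
    have hu0 : 0 ≤ u := Int.fract_nonneg t
    have hu1 : u < 1 := Int.fract_lt_one t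
    -- choose j ≤ J with 1 - δ ≤ u + j δ < 1
    obtain ⟨j, hjJ, hj1, hj2⟩ : ∃ j : ℕ, j ≤ J ∧ 1 - δ ≤ u + j * δ ∧ u + j * δ < 1 := by
      by_cases hcase : 1 - δ ≤ u
      · exact ⟨0, Nat.zero_le _, by push_cast; linarith, by push_cast; linarith⟩
      · push_neg at hcase
        have hpos : 0 ≤ (1 - δ - u) / δ := div_nonneg (by linarith) hδ0.le
        refine ⟨⌈(1 - δ - u) / δ⌉₊, ?_, ?_, ?_⟩
        · exact Nat.ceil_le_ceil ((div_le_div_iff_of_pos_right hδ0).mpr (by linarith))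
        · have h := Nat.le_ceil ((1 - δ - u) / δ)
          have := (div_le_iff₀ hδ0).mp h
          linarith
        · have h := Nat.ceil_lt_add_one hpos
          have : (⌈(1 - δ - u) / δ⌉₊ : ℝ) * δ < ((1 - δ - u) / δ + 1) * δ := by
            apply mul_lt_mul_of_pos_right h hδ0
          rw [add_mul, div_mul_cancel₀ _ (ne_of_gt hδ0)] at this
          linarith
    have hx0 : (0 : ℝ) ≤ x := by linarith
    have hjx : (j : ℝ) * x ≤ t :=
      le_trans (mul_le_mul_of_nonneg_right (by exact_mod_cast hjJ) hx0) htJ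
    set m : ℕ := (⌊t - (j : ℝ) * x⌋ + 1).toNat with hmdef
    have hfl : (0 : ℤ) ≤ ⌊t - (j : ℝ) * x⌋ := Int.floor_nonneg.mpr (by linarith)
    have hmz : (m : ℤ) = ⌊t - (j : ℝ) * x⌋ + 1 := by
      rw [hmdef]; exact Int.toNat_of_nonneg (by omega)
    have hmr : (m : ℝ) = (⌊t - (j : ℝ) * x⌋ : ℝ) + 1 := by exact_mod_cast hmz
    have hm1 : 1 ≤ m := by omega
    have hzΩ : (j : ℝ) * x + m ∈ Ω := mem_comb x hxΩ j m hm1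
    -- fract computation
    have hfr : Int.fract (t - (j : ℝ) * x) = u + j * δ := by
      have e1 : t - (j : ℝ) * x = (t + (j : ℝ) * δ) - ((j * (k + 1) : ℤ) : ℝ) := by
        push_cast
        rw [hxk]
        ring
      rw [e1, Int.fract_sub_intCast]
      have e2 : t + (j : ℝ) * δ = ((⌊t⌋ : ℤ) : ℝ) + (u + (j : ℝ) * δ) := by
        have := Int.floor_add_fract t
        rw [hu]
        push_cast
        linarith
      rw [e2, Int.fract_intCast_add, Int.fract_eq_self.mpr ⟨by linarith, hj2⟩]
    have hfr' : t - (j : ℝ) * x - (⌊t - (j : ℝ) * x⌋ : ℝ) = u + j * δ := by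
      rw [← Int.self_sub_floor] at hfr
      exact hfr
    have hz_gt : t < (j : ℝ) * x + m := by
      rw [hmr]; linarith
    have hz_le : (j : ℝ) * x + m - t ≤ δ := by
      rw [hmr]; linarith
    have := h_next n _ hzΩ hz_gt
    linarith
  refine ⟨part1, ?_⟩
  -- gaps are always at most 1
  have hgap1 : ∀ n, a (n + 1) - a n ≤ 1 := by
    intro n
    set m : ℕ := (⌊a n⌋ + 1).toNat with hmdef
    have hfl : (0 : ℤ) ≤ ⌊a n⌋ := Int.floor_nonneg.mpr (h_nonneg n)
    have hmz : (m : ℤ) = ⌊a n⌋ + 1 := by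
      rw [hmdef]; exact Int.toNat_of_nonneg (by omega)
    have hmr : (m : ℝ) = (⌊a n⌋ : ℝ) + 1 := by exact_mod_cast hmz
    have hm1 : 1 ≤ m := by omega
    have hz := hnat m hm1
    have h1 : a n < (m : ℝ) := by rw [hmr]; linarith [Int.lt_floor_add_one (a n)]
    have h2 : (m : ℝ) ≤ a n + 1 := by rw [hmr]; linarith [Int.floor_le (a n)]
    linarith [h_next n _ hz h1]
  intro ε hε
  have hε1 : ε < 1 := by
    obtain ⟨M, _, hM⟩ := hε 0
    linarith [hgap1 M]
  rw [Set.eq_empty_iff_forall_notMem]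
  rintro y ⟨hy1, hy2, hy3⟩
  have hy0 : 0 < y := by linarith
  obtain ⟨N, hN⟩ := part1 (1 - y) (by linarith) (by linarith) (by simpa using hy1)
  obtain ⟨M, hM1, hM2⟩ := hε N
  have := hN M (le_of_lt hM1)
  linarith
end

section
/- Let Ω be a normalized ω-monoid (smallest nonzero element equal to 1) that is not a tempered monoid, and suppose its footprint Δ satisfies Δ \ {0} ≠ ∅. Then λ := inf(Δ \ {0}) equals μ := inf{1 − δ : δ ∈ Δ \ {0}}, and both infima are attained: λ ∈ Δ and 1 − μ ∈ Δ. -/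
open Filter Topology

private lemma exists_nat_mul_near_one (η : ℝ) (h0 : 0 < η) (h1 : η < 1) :
    ∃ k : ℕ, 1 ≤ k ∧ (k:ℝ) * η < 1 ∧ 1 ≤ ((k:ℝ) + 1) * η := by
  refine ⟨⌈1/η⌉₊ - 1, ?_, ?_, ?_⟩
  · have ha : (1:ℝ) < 1/η := by rw [lt_div_iff₀ h0]; linarith
    have hb : (1:ℕ) < ⌈1/η⌉₊ := Nat.lt_ceil.mpr (by exact_mod_cast ha)
    omega
  · have ha : (1:ℝ) < 1/η := by rw [lt_div_iff₀ h0]; linarith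
    have hb : (1:ℕ) < ⌈1/η⌉₊ := Nat.lt_ceil.mpr (by exact_mod_cast ha)
    have hc : ((⌈1/η⌉₊ - 1 : ℕ):ℝ) < 1/η := Nat.lt_ceil.mp (by omega)
    calc ((⌈1/η⌉₊ - 1 : ℕ):ℝ) * η < (1/η) * η := mul_lt_mul_of_pos_right hc h0
    _ = 1 := by field_simp
  · have ha : (1:ℝ) < 1/η := by rw [lt_div_iff₀ h0]; linarith
    have hb : (1:ℕ) < ⌈1/η⌉₊ := Nat.lt_ceil.mpr (by exact_mod_cast ha)
    have hd : ((⌈1/η⌉₊ - 1 : ℕ):ℝ) + 1 = (⌈1/η⌉₊:ℝ) := by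
      have : (⌈1/η⌉₊ - 1 : ℕ) + 1 = ⌈1/η⌉₊ := by omega
      exact_mod_cast congrArg (Nat.cast (R := ℝ)) this
    rw [hd]
    have h1' : 1/η ≤ (⌈1/η⌉₊:ℝ) := Nat.le_ceil _
    calc (1:ℝ) = (1/η)*η := by field_simp
    _ ≤ (⌈1/η⌉₊:ℝ)*η := mul_le_mul_of_nonneg_right h1' h0.le

set_option maxHeartbeats 2000000 in
/-- For a normalized non-tempered ω-monoid with nontrivial footprint `Δ`, the infimum
`λ` of `Δ \ {0}` equals the infimum `μ` of `{1 - δ : δ ∈ Δ \ {0}}`, and both infima are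
attained: `λ ∈ Δ` and `1 - μ ∈ Δ`. -/
theorem footprint_infima_equal_and_attained
    (Ω : Set ℝ) (a : ℕ → ℝ)
    (hadd : ∀ x ∈ Ω, ∀ y ∈ Ω, x + y ∈ Ω)
    (hmono : StrictMono a) (h0 : a 0 = 0) (hrange : Set.range a = Ω)
    (hone : 1 ∈ Ω) (hnorm : ∀ x ∈ Ω, x ≠ 0 → 1 ≤ x)
    (hnt : ¬ Tendsto (fun n => a (n + 1) - a n) atTop (𝓝 0))
    (hne : (Int.fract '' Ω \ {0}).Nonempty) :
    sInf (Int.fract '' Ω \ {0}) = sInf ((fun δ => 1 - δ) '' (Int.fract '' Ω \ {0})) ∧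
      sInf (Int.fract '' Ω \ {0}) ∈ Int.fract '' Ω ∧
      1 - sInf ((fun δ => 1 - δ) '' (Int.fract '' Ω \ {0})) ∈ Int.fract '' Ω := by
  set S : Set ℝ := Int.fract '' Ω \ {0} with hSdef
  -- basic facts about Ω
  have hΩ0 : (0:ℝ) ∈ Ω := by rw [← hrange]; exact ⟨0, h0⟩
  have hΩnonneg : ∀ x ∈ Ω, 0 ≤ x := by
    intro x hx
    rw [← hrange] at hx
    obtain ⟨n, rfl⟩ := hx
    calc (0:ℝ) = a 0 := h0.symm
    _ ≤ a n := hmono.monotone (Nat.zero_le n)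
  have hnat : ∀ k : ℕ, (k:ℝ) ∈ Ω := by
    intro k
    induction k with
    | zero => simpa using hΩ0
    | succ n ih => push_cast; exact hadd _ ih 1 hone
  have haddnat : ∀ x ∈ Ω, ∀ k : ℕ, x + (k:ℝ) ∈ Ω := fun x hx k => hadd x hx _ (hnat k)
  have hsmul : ∀ x ∈ Ω, ∀ j : ℕ, 1 ≤ j → (j:ℝ) * x ∈ Ω := by
    intro x hx j hj
    induction j with
    | zero => omega
    | succ n ih =>
      rcases Nat.lt_or_ge n 1 with h | h1
      · have hn : n = 0 := by omega
        subst hn; simpa using hx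
      · push_cast
        have e : ((n:ℝ)+1) * x = (n:ℝ)*x + x := by ring
        rw [e]
        exact hadd _ (by exact_mod_cast ih h1) x hx
  -- facts about Δ = fract '' Ω
  have hmult : ∀ δ ∈ Int.fract '' Ω, ∀ j : ℕ, 1 ≤ j → Int.fract ((j:ℝ) * δ) ∈ Int.fract '' Ω := by
    intro δ hδ j hj
    obtain ⟨x, hx, rfl⟩ := hδ
    refine ⟨(j:ℝ)*x, hsmul x hx j hj, ?_⟩
    apply Int.fract_eq_fract.mpr
    exact ⟨(j:ℤ)*⌊x⌋, by push_cast; nlinarith [Int.self_sub_fract x]⟩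
  have haddΔ : ∀ u ∈ Int.fract '' Ω, ∀ v ∈ Int.fract '' Ω, Int.fract (u + v) ∈ Int.fract '' Ω := by
    intro u hu v hv
    obtain ⟨x, hx, rfl⟩ := hu
    obtain ⟨y, hy, rfl⟩ := hv
    refine ⟨x + y, hadd x hx y hy, ?_⟩
    apply Int.fract_eq_fract.mpr
    exact ⟨⌊x⌋ + ⌊y⌋, by push_cast; nlinarith [Int.self_sub_fract x, Int.self_sub_fract y]⟩
  -- facts about S
  have hSpos : ∀ δ ∈ S, 0 < δ := by
    intro δ hδ
    obtain ⟨⟨x, _, rfl⟩, h0'⟩ := hδ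
    exact lt_of_le_of_ne (Int.fract_nonneg x) (Ne.symm h0')
  have hSlt1 : ∀ δ ∈ S, δ < 1 := by
    intro δ hδ
    obtain ⟨⟨x, _, rfl⟩, _⟩ := hδ
    exact Int.fract_lt_one x
  have hbdd : BddBelow S := ⟨0, fun δ hδ => (hSpos δ hδ).le⟩
  set lam : ℝ := sInf S with hlamdef
  have hlb : ∀ δ ∈ S, lam ≤ δ := fun δ hδ => csInf_le hbdd hδ
  have hlam0 : 0 ≤ lam := le_csInf hne fun δ hδ => (hSpos δ hδ).le
  -- Lemma D: arbitrarily small elements of S would force the gaps to tend to 0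
  have hD : (∀ ε : ℝ, 0 < ε → ∃ δ ∈ S, δ < ε) → False := by
    intro h
    apply hnt
    rw [NormedAddCommGroup.tendsto_nhds_zero]
    intro ε hε
    obtain ⟨δ, hδS, hδε⟩ := h ε hε
    obtain ⟨⟨x, hxΩ, hxf⟩, hδ0'⟩ := hδS
    have hδ0 : 0 < δ := hSpos δ ⟨⟨x, hxΩ, hxf⟩, hδ0'⟩
    have hx0 : 0 ≤ x := hΩnonneg x hxΩ
    have hB0 : 0 ≤ (1/δ + 1) * (x + 1) + 1 := by positivity
    -- every long-enough interval of length δ meets Ω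
    have claim : ∀ t : ℝ, (1/δ + 1) * (x + 1) + 1 ≤ t → ∃ y ∈ Ω, t < y ∧ y ≤ t + δ := by
      intro t ht
      have ht0 : 0 ≤ t := le_trans hB0 ht
      set θ : ℝ := Int.fract t with hθdef
      have hθ0 : 0 ≤ θ := Int.fract_nonneg t
      have hθ1 : θ < 1 := Int.fract_lt_one t
      set j : ℕ := ⌊θ/δ⌋₊ + 1 with hjdef
      have h3 : ((j:ℕ):ℝ) = (⌊θ/δ⌋₊:ℝ) + 1 := by rw [hjdef]; push_cast; ring
      have hj1 : θ < (j:ℝ) * δ := by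
        have h1 : θ/δ < (⌊θ/δ⌋₊:ℝ) + 1 := Nat.lt_floor_add_one (θ/δ)
        have h4 : θ < ((⌊θ/δ⌋₊:ℝ) + 1) * δ := by
          have := mul_lt_mul_of_pos_right h1 hδ0
          rwa [div_mul_cancel₀ _ (ne_of_gt hδ0)] at this
        rw [h3]; exact h4
      have hfl : (⌊θ/δ⌋₊:ℝ) * δ ≤ θ := by
        have h1 : (⌊θ/δ⌋₊:ℝ) ≤ θ/δ := Nat.floor_le (by positivity)
        have h2 : (⌊θ/δ⌋₊:ℝ) * δ ≤ θ/δ * δ := mul_le_mul_of_nonneg_right h1 hδ0.le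
        rwa [div_mul_cancel₀ _ (ne_of_gt hδ0)] at h2
      have hj2 : (j:ℝ) * δ ≤ θ + δ := by rw [h3]; nlinarith
      have hteq : t = (⌊t⌋:ℝ) + θ := (Int.floor_add_fract t).symm
      by_cases hcase : (j:ℝ) * δ < 1
      · -- use y = j*x + m
        have hjle : (j:ℝ) ≤ 1/δ + 1 := by
          have h1 : (⌊θ/δ⌋₊:ℝ) ≤ θ/δ := Nat.floor_le (by positivity)
          have h2 : θ/δ ≤ 1/δ := by gcongr
          rw [h3]; linarith
        have hjx_le : (j:ℝ) * x ≤ t := by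
          have hA : (j:ℝ)*x ≤ (1/δ+1)*x := mul_le_mul_of_nonneg_right hjle hx0
          have hpos : (0:ℝ) ≤ 1/δ + 1 := by positivity
          have hB2 : (1/δ+1)*x ≤ (1/δ+1)*(x+1) := by nlinarith
          linarith
        have hfloor_le : ⌊(j:ℝ)*x⌋ ≤ ⌊t⌋ := Int.floor_le_floor hjx_le
        set m : ℕ := (⌊t⌋ - ⌊(j:ℝ)*x⌋).toNat with hmdef
        have hmZ : ((m:ℕ):ℤ) = ⌊t⌋ - ⌊(j:ℝ)*x⌋ := by rw [hmdef]; omega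
        have hmval : ((m:ℕ):ℝ) = (⌊t⌋:ℝ) - (⌊(j:ℝ)*x⌋:ℝ) := by exact_mod_cast hmZ
        have hjxΩ : (j:ℝ)*x ∈ Ω := hsmul x hxΩ j (by omega)
        have hfx : (j:ℝ)*x = (⌊(j:ℝ)*x⌋:ℝ) + (j:ℝ)*δ := by
          have h1 : Int.fract ((j:ℝ)*x) = Int.fract ((j:ℝ)*δ) := by
            apply Int.fract_eq_fract.mpr
            refine ⟨(j:ℤ)*⌊x⌋, ?_⟩
            rw [← hxf]
            push_cast
            nlinarith [Int.self_sub_fract x]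
          have h2 : Int.fract ((j:ℝ)*δ) = (j:ℝ)*δ :=
            Int.fract_eq_self.mpr ⟨by positivity, hcase⟩
          have h4 := Int.floor_add_fract ((j:ℝ)*x)
          rw [h1, h2] at h4
          linarith
        have hyval : (j:ℝ)*x + (m:ℝ) = (⌊t⌋:ℝ) + (j:ℝ)*δ := by
          rw [hmval]; linarith [hfx]
        refine ⟨(j:ℝ)*x + (m:ℝ), haddnat _ hjxΩ m, ?_, ?_⟩
        · linarith [hyval, hteq, hj1]
        · linarith [hyval, hteq, hj2]
      · -- use y = ⌊t⌋ + 1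
        have hk0 : (0:ℤ) ≤ ⌊t⌋ := Int.floor_nonneg.mpr ht0
        have hkk : ((⌊t⌋.toNat + 1 : ℕ):ℝ) = (⌊t⌋:ℝ) + 1 := by
          have h2 : ((⌊t⌋.toNat:ℕ):ℝ) = (⌊t⌋:ℝ) := by exact_mod_cast Int.toNat_of_nonneg hk0
          push_cast
          rw [h2]
        push_neg at hcase
        refine ⟨((⌊t⌋.toNat + 1 : ℕ):ℝ), hnat _, ?_, ?_⟩
        · rw [hkk]; exact Int.lt_floor_add_one t
        · rw [hkk]; linarith [hteq, hj2, hcase]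
    -- gaps are eventually small
    obtain ⟨mN, hmN⟩ : ∃ mN, a mN = ((⌈(1/δ + 1) * (x + 1) + 1⌉₊:ℕ):ℝ) := by
      have hmem : ((⌈(1/δ + 1) * (x + 1) + 1⌉₊:ℕ):ℝ) ∈ Ω := hnat _
      rw [← hrange] at hmem
      obtain ⟨mN, h'⟩ := hmem
      exact ⟨mN, h'⟩
    filter_upwards [eventually_ge_atTop mN] with n hn
    have hB : (1/δ + 1) * (x + 1) + 1 ≤ a n := by
      calc (1/δ + 1) * (x + 1) + 1 ≤ ((⌈(1/δ + 1) * (x + 1) + 1⌉₊:ℕ):ℝ) := Nat.le_ceil _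
      _ = a mN := hmN.symm
      _ ≤ a n := hmono.monotone hn
    obtain ⟨y, hyΩ, hy1, hy2⟩ := claim (a n) hB
    have : y ∈ Set.range a := by rw [hrange]; exact hyΩ
    obtain ⟨m', rfl⟩ := this
    have hnm : n < m' := hmono.lt_iff_lt.mp hy1
    have h1 : a (n+1) ≤ a m' := hmono.monotone hnm
    have h2 : a n < a (n+1) := hmono (Nat.lt_succ_self n)
    rw [Real.norm_eq_abs, abs_of_pos (by linarith)]
    linarith
  -- λ > 0
  have hlampos : 0 < lam := by
    rcases lt_or_eq_of_le hlam0 with hpos | hzero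
    · exact hpos
    · exfalso
      apply hD
      intro ε hε
      have hlt : sInf S < ε := by rw [← hlamdef, ← hzero]; exact hε
      exact exists_lt_of_csInf_lt hne hlt
  have hlam_lt1 : lam < 1 := by
    obtain ⟨δ, hδ⟩ := hne
    exact lt_of_le_of_lt (hlb δ hδ) (hSlt1 δ hδ)
  -- no element of S lies in (1 - lam, 1)
  have hbig : ∀ β ∈ S, 1 - lam < β → False := by
    intro β hβS hβgt
    have hβ1 : β < 1 := hSlt1 β hβS
    have hη0 : 0 < 1 - β := by linarith
    have hηlam : 1 - β < lam := by linarith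
    have hη1 : 1 - β < 1 := by linarith [hlam_lt1]
    obtain ⟨k, hk1, hklt, hkge⟩ := exists_nat_mul_near_one (1 - β) hη0 hη1
    have hk1' : (1:ℝ) ≤ (k:ℝ) := by exact_mod_cast hk1
    have hkη0 : 0 < (k:ℝ)*(1 - β) := mul_pos (by linarith) hη0
    have hfkβ : Int.fract ((k:ℝ)*β) = 1 - (k:ℝ)*(1 - β) := by
      have e1 : Int.fract ((k:ℝ)*β) = Int.fract (-((k:ℝ)*(1 - β))) := by
        apply Int.fract_eq_fract.mpr
        exact ⟨(k:ℤ), by push_cast; ring⟩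
      have e2 : Int.fract ((k:ℝ)*(1 - β)) = (k:ℝ)*(1 - β) :=
        Int.fract_eq_self.mpr ⟨hkη0.le, hklt⟩
      have e3 : Int.fract ((k:ℝ)*(1 - β)) ≠ 0 := by rw [e2]; exact ne_of_gt hkη0
      rw [e1, Int.fract_neg e3, e2]
    have hmem : 1 - (k:ℝ)*(1 - β) ∈ Int.fract '' Ω := by
      rw [← hfkβ]; exact hmult β hβS.1 k hk1
    have hne0 : 1 - (k:ℝ)*(1 - β) ≠ 0 := ne_of_gt (by linarith)
    have hsmall : 1 - (k:ℝ)*(1 - β) ∈ S := ⟨hmem, hne0⟩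
    have hle := hlb _ hsmall
    have hexp : ((k:ℝ)+1)*(1 - β) = (k:ℝ)*(1 - β) + (1 - β) := by ring
    linarith
  -- every element of S is rational (some positive multiple is an integer)
  have hrat : ∀ δ ∈ S, ∃ q : ℕ, 1 ≤ q ∧ ∃ z : ℤ, (q:ℝ) * δ - (z:ℝ) = 0 := by
    intro δ hδS
    by_contra hcon
    push_neg at hcon
    obtain ⟨f, hfdef⟩ : ∃ f : ℕ → ℝ, ∀ n, f n = Int.fract (((n+1:ℕ):ℝ) * δ) :=
      ⟨_, fun n => rfl⟩
    have hf0 : ∀ n, 0 ≤ f n ∧ f n < 1 := fun n => by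
      rw [hfdef n]; exact ⟨Int.fract_nonneg _, Int.fract_lt_one _⟩
    have hinj : Function.Injective f := by
      intro n m hnm
      by_contra hne'
      rw [hfdef n, hfdef m] at hnm
      obtain ⟨z, hz⟩ := Int.fract_eq_fract.mp hnm
      rcases Nat.lt_or_ge n m with hlt | hge
      · refine hcon (m - n) (by omega) (-z) ?_
        push_cast [Nat.cast_sub hlt.le]
        push_cast at hz
        linarith
      · have hlt : m < n := by omega
        refine hcon (n - m) (by omega) z ?_
        push_cast [Nat.cast_sub hlt.le]
        push_cast at hz
        linarith
    have hIcc : ∀ n, f n ∈ Set.Icc (0:ℝ) 1 := fun n => ⟨(hf0 n).1, (hf0 n).2.le⟩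
    obtain ⟨L, _, φ, hφ, hconv⟩ := isCompact_Icc.tendsto_subseq hIcc
    rw [Metric.tendsto_atTop] at hconv
    obtain ⟨N, hN⟩ := hconv (lam/2) (by linarith)
    have h1 := hN N (le_refl N)
    have h2 := hN (N+1) (by omega)
    simp only [Function.comp_apply, Real.dist_eq] at h1 h2
    have hφlt : φ N < φ (N+1) := hφ (Nat.lt_succ_self N)
    have hdne : f (φ (N+1)) - f (φ N) ≠ 0 := by
      intro hh
      have heq : f (φ (N+1)) = f (φ N) := by linarith [sub_eq_zero.mp hh]
      have := hinj heq
      omega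
    have hdlt : |f (φ (N+1)) - f (φ N)| < lam := by
      calc |f (φ (N+1)) - f (φ N)| ≤ |f (φ (N+1)) - L| + |L - f (φ N)| := abs_sub_le _ _ _
      _ < lam/2 + lam/2 := by
          rw [abs_sub_comm L (f (φ N))]
          exact add_lt_add h2 h1
      _ = lam := by ring
    have hq1 : 1 ≤ φ (N+1) - φ N := by omega
    have hfq : Int.fract (((φ (N+1) - φ N:ℕ):ℝ)*δ) = Int.fract (f (φ (N+1)) - f (φ N)) := by
      apply Int.fract_eq_fract.mpr
      refine ⟨⌊((φ (N+1)+1:ℕ):ℝ)*δ⌋ - ⌊((φ N+1:ℕ):ℝ)*δ⌋, ?_⟩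
      have eA := Int.self_sub_floor (((φ (N+1)+1:ℕ):ℝ)*δ)
      have eB := Int.self_sub_floor (((φ N+1:ℕ):ℝ)*δ)
      rw [hfdef (φ (N+1)), hfdef (φ N)]
      push_cast [Nat.cast_sub hφlt.le]
      push_cast at eA eB
      linarith
    have hd1 : -1 < f (φ (N+1)) - f (φ N) := by
      linarith [(hf0 (φ (N+1))).1, (hf0 (φ N)).2]
    rcases lt_or_gt_of_ne hdne with hneg | hpos
    · -- negative difference : produces a big element in (1 - lam, 1)
      have hfd : Int.fract (f (φ (N+1)) - f (φ N)) = (f (φ (N+1)) - f (φ N)) + 1 := by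
        have e1 : Int.fract (f (φ (N+1)) - f (φ N))
            = Int.fract ((f (φ (N+1)) - f (φ N)) + 1) :=
          Int.fract_eq_fract.mpr ⟨-1, by push_cast; ring⟩
        rw [e1]
        exact Int.fract_eq_self.mpr ⟨by linarith, by linarith⟩
      have hmem : (f (φ (N+1)) - f (φ N)) + 1 ∈ Int.fract '' Ω := by
        rw [← hfd, ← hfq]
        exact hmult δ hδS.1 _ hq1
      have hβS : (f (φ (N+1)) - f (φ N)) + 1 ∈ S := ⟨hmem, ne_of_gt (by linarith)⟩
      refine hbig _ hβS ?_
      rw [abs_of_neg hneg] at hdlt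
      linarith
    · -- positive difference : produces an element below lam
      have hdlt' : f (φ (N+1)) - f (φ N) < lam := by rwa [abs_of_pos hpos] at hdlt
      have hfd : Int.fract (f (φ (N+1)) - f (φ N)) = f (φ (N+1)) - f (φ N) :=
        Int.fract_eq_self.mpr ⟨hpos.le, by linarith [hlam_lt1]⟩
      have hmem : f (φ (N+1)) - f (φ N) ∈ Int.fract '' Ω := by
        rw [← hfd, ← hfq]
        exact hmult δ hδS.1 _ hq1
      have hdS : f (φ (N+1)) - f (φ N) ∈ S := ⟨hmem, hdne⟩
      linarith [hlb _ hdS]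
  -- symmetry of S under δ ↦ 1 - δ
  have hsym : ∀ δ ∈ S, 1 - δ ∈ S := by
    intro δ hδS
    obtain ⟨q, hq1, z, hz⟩ := hrat δ hδS
    have hδ0 : 0 < δ := hSpos δ hδS
    have hδ1 : δ < 1 := hSlt1 δ hδS
    have hfδ : Int.fract δ = δ := Int.fract_eq_self.mpr ⟨hδ0.le, hδ1⟩
    have hq2 : 2 ≤ q := by
      by_contra hh
      have hq1' : q = 1 := by omega
      rw [hq1'] at hz
      push_cast at hz
      have hz' : δ = (z:ℝ) := by linarith
      have hz0 : (0:ℤ) < z := by exact_mod_cast hz' ▸ hδ0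
      have hz1 : z < 1 := by exact_mod_cast hz' ▸ hδ1
      omega
    have hmem : Int.fract (((q-1:ℕ):ℝ)*δ) ∈ Int.fract '' Ω := hmult δ hδS.1 (q-1) (by omega)
    have hval : Int.fract (((q-1:ℕ):ℝ)*δ) = 1 - δ := by
      have e1 : Int.fract (((q-1:ℕ):ℝ)*δ) = Int.fract (-δ) := by
        apply Int.fract_eq_fract.mpr
        refine ⟨z, ?_⟩
        push_cast [Nat.cast_sub (by omega : 1 ≤ q)]
        linarith
      rw [e1, Int.fract_neg (by rw [hfδ]; exact ne_of_gt hδ0), hfδ]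
    exact ⟨hval ▸ hmem, ne_of_gt (by linarith)⟩
  -- the infimum is attained
  have hattain : lam ∈ S := by
    by_contra hnotin
    have h1 : sInf S < lam + lam := by rw [← hlamdef]; linarith
    obtain ⟨δ, hδS, hδlt⟩ := exists_lt_of_csInf_lt hne h1
    have hδgt : lam < δ := lt_of_le_of_ne (hlb δ hδS) (fun hh => hnotin (hh ▸ hδS))
    have h2 : sInf S < δ := by rw [← hlamdef]; exact hδgt
    obtain ⟨δ', hδ'S, hδ'lt⟩ := exists_lt_of_csInf_lt hne h2
    have hδ'gt : lam < δ' := lt_of_le_of_ne (hlb δ' hδ'S) (fun hh => hnotin (hh ▸ hδ'S))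
    have hd0 : 0 < δ - δ' := by linarith
    have hdlam : δ - δ' < lam := by linarith
    have h1δ' : 1 - δ' ∈ S := hsym δ' hδ'S
    have hmem : Int.fract (δ + (1 - δ')) ∈ Int.fract '' Ω := haddΔ δ hδS.1 _ h1δ'.1
    have hval : Int.fract (δ + (1 - δ')) = δ - δ' := by
      have e1 : Int.fract (δ + (1-δ')) = Int.fract (δ - δ') :=
        Int.fract_eq_fract.mpr ⟨1, by push_cast; ring⟩
      rw [e1]
      exact Int.fract_eq_self.mpr ⟨hd0.le, by linarith [hlam_lt1]⟩
    have hdS : δ - δ' ∈ S := ⟨hval ▸ hmem, ne_of_gt hd0⟩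
    linarith [hlb _ hdS]
  -- assembly
  have himg : (fun δ => 1 - δ) '' S = S := by
    apply Set.Subset.antisymm
    · rintro _ ⟨δ, hδ, rfl⟩
      exact hsym δ hδ
    · intro δ hδ
      exact ⟨1 - δ, hsym δ hδ, by simp⟩
  refine ⟨?_, hattain.1, ?_⟩
  · rw [himg, ← hlamdef]
  · rw [himg, ← hlamdef]
    exact (hsym lam hattain).1
end

section
/- Let Ω be a normalized ω-monoid (smallest nonzero element equal to 1) that is not a tempered monoid. Then there exists a positive integer k such that the footprint of Ω equals {j/k : j = 0, 1, …, k − 1}; in particular Ω ⊆ {n/k : n ∈ ℕ}. -/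
open Filter Topology

lemma fract_add_fract_right (a b : ℝ) :
    Int.fract (a + Int.fract b) = Int.fract (a + b) := by
  have h : a + Int.fract b = (a + b) - (⌊b⌋ : ℤ) := by rw [Int.fract]; ring
  rw [h, Int.fract_sub_intCast]

lemma fract_fract_add_fract (a b : ℝ) :
    Int.fract (Int.fract a + Int.fract b) = Int.fract (a + b) := by
  rw [fract_add_fract_right, add_comm, fract_add_fract_right, add_comm]



lemma finite_fract_submonoid_cyclic (Δ : Set ℝ)
    (hIco : Δ ⊆ Set.Ico (0:ℝ) 1) (h0 : (0:ℝ) ∈ Δ)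
    (hcl : ∀ x ∈ Δ, ∀ y ∈ Δ, Int.fract (x + y) ∈ Δ)
    (hfin : Δ.Finite) :
    ∃ k : ℕ, 0 < k ∧ Δ = {x : ℝ | ∃ j : ℕ, j < k ∧ x = (j:ℝ)/(k:ℝ)} := by
  -- multiples
  have hmul : ∀ (n : ℕ) (x : ℝ), x ∈ Δ → Int.fract ((n:ℝ) * x) ∈ Δ := by
    intro n x hx
    induction n with
    | zero => simpa using h0
    | succ n ih =>
        have h1 : Int.fract (Int.fract ((n:ℝ) * x) + x) ∈ Δ := hcl _ ih _ hx
        have h2 : Int.fract (Int.fract ((n:ℝ)*x) + x) = Int.fract (((n:ℕ)+1:ℝ) * x) := by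
          rw [add_comm, fract_add_fract_right, add_comm]
          ring_nf
        rw [h2] at h1
        convert h1 using 2
        push_cast; ring
  by_cases hpos : ∃ x ∈ Δ, 0 < x
  · obtain ⟨x₀, hx₀Δ, hx₀pos⟩ := hpos
    -- minimal positive element δ
    set S : Set ℝ := {x ∈ Δ | 0 < x} with hS
    have hSfin : S.Finite := hfin.subset (fun x hx => hx.1)
    obtain ⟨δ, hδS, hδmin⟩ := Set.exists_min_image S id hSfin ⟨x₀, hx₀Δ, hx₀pos⟩
    obtain ⟨hδΔ, hδpos⟩ := hδS
    have hδlt1 : δ < 1 := (hIco hδΔ).2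
    -- fract of elements is themselves
    have hself : ∀ x ∈ Δ, Int.fract x = x := fun x hx =>
      Int.fract_eq_self.mpr ⟨(hIco hx).1, (hIco hx).2⟩
    -- inverses
    have hinv : ∀ x ∈ Δ, x ≠ 0 → 1 - x ∈ Δ := by
      intro x hx hx0
      have hxpos : 0 < x := lt_of_le_of_ne (hIco hx).1 (Ne.symm hx0)
      have hxlt1 : x < 1 := (hIco hx).2
      obtain ⟨m, -, n, -, hmn, heq⟩ :=
        Set.infinite_univ.exists_ne_map_eq_of_mapsTo
          (f := fun n : ℕ => Int.fract ((n:ℝ) * x))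
          (fun n _ => hmul n x hx) hfin
      wlog hlt : m < n generalizing m n
      · exact this n m hmn.symm heq.symm (by omega)
      obtain ⟨z, hz⟩ := Int.fract_eq_fract.mp heq.symm
      -- (n - m) * x = z
      have hpx : ((n - m : ℕ) : ℝ) * x = (z:ℝ) := by
        rw [← hz]; push_cast [Nat.cast_sub hlt.le]; ring
      set p := n - m with hp
      have hp1 : 1 ≤ p := by omega
      have hzpos : (0:ℝ) < z := by
        rw [← hpx]
        positivity
      have hp2 : 2 ≤ p := by
        by_contra h
        have hpe : p = 1 := by omega
        rw [hpe] at hpx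
        simp at hpx
        have hzi : (0:ℤ) < z := by exact_mod_cast hzpos
        have hz1 : (1:ℝ) ≤ z := by exact_mod_cast hzi
        linarith
      have hmem : Int.fract (((p-1:ℕ):ℝ) * x) ∈ Δ := hmul (p-1) x hx
      have hval : ((p-1:ℕ):ℝ) * x = (z:ℝ) + (-x) := by
        push_cast [Nat.cast_sub hp1]
        rw [sub_mul, hpx]
        ring
      rw [hval, Int.fract_intCast_add, Int.fract_neg (by rw [hself x hx]; exact hx0), hself x hx] at hmem
      exact hmem
    -- every element is a natural multiple of δ
    have hdvd : ∀ x ∈ Δ, ∃ j : ℕ, x = (j:ℝ) * δ := by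
      intro x hx
      by_cases hx0 : x = 0
      · exact ⟨0, by simp [hx0]⟩
      have hxpos : 0 < x := lt_of_le_of_ne (hIco hx).1 (Ne.symm hx0)
      set j : ℕ := ⌊x/δ⌋₊ with hj
      have hjle : (j:ℝ) ≤ x/δ := Nat.floor_le (by positivity)
      have hjgt : x/δ < j + 1 := Nat.lt_floor_add_one _
      set r : ℝ := x - j * δ with hr
      have hr0 : 0 ≤ r := by
        have := mul_le_mul_of_nonneg_right hjle hδpos.le
        rw [div_mul_cancel₀ _ hδpos.ne'] at this
        simp [hr]; linarith
      have hr1 : r < δ := by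
        have := mul_lt_mul_of_pos_right hjgt hδpos
        rw [div_mul_cancel₀ _ hδpos.ne'] at this
        simp [hr]; nlinarith
      -- r ∈ Δ
      have h1mδ : 1 - δ ∈ Δ := hinv δ hδΔ hδpos.ne'
      have hu : Int.fract ((j:ℝ) * (1 - δ)) ∈ Δ := hmul j _ h1mδ
      have h2 : Int.fract (x + Int.fract ((j:ℝ)*(1-δ))) ∈ Δ := hcl _ hx _ hu
      have h3 : Int.fract (x + Int.fract ((j:ℝ)*(1-δ))) = r := by
        rw [fract_add_fract_right]
        have : x + (j:ℝ)*(1-δ) = r + (j:ℕ) := by rw [hr]; push_cast; ring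
        rw [this]
        have : r + ((j:ℕ):ℝ) = ((j:ℤ):ℝ) + r := by push_cast; ring
        rw [this, Int.fract_intCast_add, Int.fract_eq_self.mpr ⟨hr0, lt_of_lt_of_le hr1 hδlt1.le⟩]
      rw [h3] at h2
      have hrz : r = 0 := by
        by_contra hrz
        have hrpos : 0 < r := lt_of_le_of_ne hr0 (Ne.symm hrz)
        have := hδmin r ⟨h2, hrpos⟩
        simp at this
        linarith
      exact ⟨j, by rw [hr] at hrz; linarith⟩
    -- δ = 1/k
    obtain ⟨m, hm⟩ := hdvd (1 - δ) (hinv δ hδΔ hδpos.ne')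
    set k : ℕ := m + 1 with hkdef
    have hk1 : (k:ℝ) * δ = 1 := by push_cast [hkdef]; linarith
    have hkpos : 0 < k := Nat.succ_pos m
    refine ⟨k, hkpos, ?_⟩
    have hknz : (k:ℝ) ≠ 0 := by positivity
    ext x
    constructor
    · intro hx
      obtain ⟨j, hjx⟩ := hdvd x hx
      refine ⟨j, ?_, ?_⟩
      · have : (j:ℝ) * δ < (k:ℝ) * δ := by rw [← hjx, hk1]; exact (hIco hx).2
        exact_mod_cast lt_of_mul_lt_mul_right this hδpos.le
      · rw [hjx, eq_div_iff hknz]; nlinarith [hk1]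
    · rintro ⟨j, hjk, rfl⟩
      have hval : (j:ℝ)/(k:ℝ) = (j:ℝ) * δ := by
        rw [div_eq_iff hknz]; nlinarith [hk1]
      have := hmul j δ hδΔ
      rw [Int.fract_eq_self.mpr ⟨by positivity, ?_⟩] at this
      · rw [hval]; exact this
      · have : (j:ℝ) * δ < (k:ℝ) * δ := by
          apply mul_lt_mul_of_pos_right _ hδpos
          exact_mod_cast hjk
        rw [hk1] at this; exact this
  · -- Δ = {0}
    push_neg at hpos
    refine ⟨1, one_pos, ?_⟩
    ext x
    constructor
    · intro hx
      have hx0 : x = 0 := le_antisymm (hpos x hx) (hIco hx).1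
      exact ⟨0, by norm_num, by simp [hx0]⟩
    · rintro ⟨j, hj, rfl⟩
      interval_cases j
      simpa using h0

theorem footprint_finite'
    (Ω : Set ℝ) (a : ℕ → ℝ)
    (hadd : ∀ x ∈ Ω, ∀ y ∈ Ω, x + y ∈ Ω)
    (hmono : StrictMono a) (h0 : a 0 = 0) (hrange : Set.range a = Ω)
    (hone : 1 ∈ Ω) (hnorm : ∀ x ∈ Ω, x ≠ 0 → 1 ≤ x)
    (hnt : ¬ Tendsto (fun n => a (n + 1) - a n) atTop (𝓝 0)) :
    (Int.fract '' Ω).Finite := by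
  have hΩ0 : (0:ℝ) ∈ Ω := hrange ▸ ⟨0, h0⟩
  have hnonneg : ∀ x ∈ Ω, 0 ≤ x := by
    intro x hx
    rw [← hrange] at hx
    obtain ⟨n, rfl⟩ := hx
    rw [← h0]; exact hmono.monotone (Nat.zero_le n)
  have hnat : ∀ (t : ℕ), ∀ x ∈ Ω, x + (t:ℝ) ∈ Ω := by
    intro t
    induction t with
    | zero => intro x hx; simpa using hx
    | succ t ih =>
        intro x hx
        have := hadd _ (ih x hx) _ hone
        convert this using 1; push_cast; ring
  have hnsmul : ∀ (n : ℕ), ∀ x ∈ Ω, (n:ℝ) * x ∈ Ω := by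
    intro n
    induction n with
    | zero => intro x hx; simpa using hΩ0
    | succ n ih =>
        intro x hx
        have := hadd _ (ih x hx) _ hx
        convert this using 1; push_cast; ring
  have hNmem : ∀ n : ℕ, (n:ℝ) ∈ Ω := fun n => by simpa using hnat n 0 hΩ0
  have htop : Tendsto a atTop atTop := by
    apply tendsto_atTop_atTop_of_monotone' hmono.monotone
    rintro ⟨c, hc⟩
    have h1 : ((⌈c⌉₊ + 1 : ℕ) : ℝ) ∈ Set.range a := hrange ▸ hNmem _
    have h2 : ((⌈c⌉₊ + 1 : ℕ) : ℝ) ≤ c := hc h1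
    have h3 : c ≤ (⌈c⌉₊ : ℝ) := Nat.le_ceil c
    push_cast at h2
    linarith
  by_contra hinf
  rw [← Set.not_infinite, not_not] at hinf
  apply hnt
  rw [Metric.tendsto_atTop]
  intro ε hε
  -- two elements of the footprint within ε/2
  set N : ℕ := ⌈2/ε⌉₊ with hN
  have hNpos : 0 < N := Nat.ceil_pos.mpr (by positivity)
  have hNR : (0:ℝ) < N := by exact_mod_cast hNpos
  obtain ⟨F, hFsub, hFcard⟩ := hinf.exists_subset_card_eq (N+1)
  have hFmem : ∀ u ∈ F, 0 ≤ u ∧ u < 1 := by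
    intro u hu
    obtain ⟨w, -, rfl⟩ := hFsub hu
    exact ⟨Int.fract_nonneg w, Int.fract_lt_one w⟩
  have hmaps : ∀ u ∈ F, ⌊(N:ℝ) * u⌋₊ ∈ Finset.range N := by
    intro u hu
    obtain ⟨hu0, hu1⟩ := hFmem u hu
    rw [Finset.mem_range]
    have h1 : (N:ℝ) * u < N := by nlinarith
    exact (Nat.floor_lt (by positivity)).mpr h1
  obtain ⟨x, hxF, y, hyF, hxy, hfeq⟩ :=
    Finset.exists_ne_map_eq_of_card_lt_of_maps_to
      (by simp [hFcard] : (Finset.range N).card < F.card) hmaps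
  -- |x - y| < 1/N ≤ ε/2
  have key : ∀ u v : ℝ, 0 ≤ u → 0 ≤ v → ⌊(N:ℝ)*u⌋₊ = ⌊(N:ℝ)*v⌋₊ → u - v < ε/2 := by
    intro u v hu hv huv
    have h1 : (⌊(N:ℝ)*v⌋₊ : ℝ) ≤ (N:ℝ)*v := Nat.floor_le (by positivity)
    have h2 : (N:ℝ)*u < ⌊(N:ℝ)*u⌋₊ + 1 := Nat.lt_floor_add_one _
    rw [huv] at h2
    have h3 : (N:ℝ)*u - (N:ℝ)*v < 1 := by linarith
    have h4 : u - v < 1/(N:ℝ) := by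
      rw [lt_div_iff₀ hNR]; nlinarith
    have h5 : 1/(N:ℝ) ≤ ε/2 := by
      have hc : 2/ε ≤ (N:ℝ) := by rw [hN]; exact Nat.le_ceil (2/ε)
      rw [div_le_div_iff₀ hNR (by norm_num : (0:ℝ) < 2)]
      calc (1:ℝ)*2 = (2/ε) * ε := by field_simp
        _ ≤ (N:ℝ) * ε := mul_le_mul_of_nonneg_right hc hε.le
        _ = ε * (N:ℝ) := mul_comm _ _
    linarith
  have hpair : ∃ δ₁ ∈ Int.fract '' Ω, ∃ δ₂ ∈ Int.fract '' Ω, δ₁ < δ₂ ∧ δ₂ - δ₁ < ε/2 := by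
    rcases hxy.lt_or_gt with hlt | hlt
    · exact ⟨x, hFsub hxF, y, hFsub hyF, hlt,
        key y x (hFmem y hyF).1 (hFmem x hxF).1 hfeq.symm⟩
    · exact ⟨y, hFsub hyF, x, hFsub hxF, hlt,
        key x y (hFmem x hxF).1 (hFmem y hyF).1 hfeq⟩
  obtain ⟨δ₁, hδ₁, δ₂, hδ₂, hltδ, hdlt⟩ := hpair
  set d : ℝ := δ₂ - δ₁ with hdd
  have hdpos : 0 < d := sub_pos.mpr hltδ
  -- representatives with a common integer part
  have hrep : ∀ w ∈ Ω, ∀ m : ℕ, ⌊w⌋.toNat ≤ m → (m:ℝ) + Int.fract w ∈ Ω := by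
    intro w hw m hm
    have h1 : w + ((m - ⌊w⌋.toNat : ℕ):ℝ) ∈ Ω := hnat _ w hw
    have h2 : (⌊w⌋.toNat : ℝ) = (⌊w⌋ : ℝ) := by
      exact_mod_cast congrArg (Int.cast : ℤ → ℝ)
        (Int.toNat_of_nonneg (Int.floor_nonneg.mpr (hnonneg w hw)))
    convert h1 using 1
    rw [Nat.cast_sub hm, h2, Int.fract]
    ring
  obtain ⟨u, huΩ, hu⟩ := hδ₁
  obtain ⟨v, hvΩ, hv⟩ := hδ₂
  set M : ℕ := max ⌊u⌋.toNat ⌊v⌋.toNat with hM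
  have hM1 : (M:ℝ) + δ₁ ∈ Ω := by rw [← hu]; exact hrep u huΩ M (le_max_left _ _)
  have hM2 : (M:ℝ) + δ₂ ∈ Ω := by rw [← hv]; exact hrep v hvΩ M (le_max_right _ _)
  set K : ℕ := ⌈1/d⌉₊ with hK
  set B : ℝ := (K:ℝ) * ((M:ℝ) + δ₁) with hB
  have grid : ∀ j : ℕ, j ≤ K → ∀ t : ℕ, B + (j:ℝ)*d + (t:ℝ) ∈ Ω := by
    intro j hj t
    have h1 := hnsmul (K - j) _ hM1
    have h2 := hnsmul j _ hM2
    have h3 := hadd _ h1 _ h2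
    have h4 := hnat t _ h3
    convert h4 using 1
    rw [hB, hdd, Nat.cast_sub hj]
    ring
  have cover : ∀ w : ℝ, B ≤ w → ∃ p ∈ Ω, w ≤ p ∧ p ≤ w + d := by
    intro w hw
    set z : ℝ := w - B with hz
    have hz0 : 0 ≤ z := sub_nonneg.mpr hw
    set t : ℕ := ⌊z⌋₊ with ht
    set r : ℝ := z - t with hrdef
    have hr0 : 0 ≤ r := sub_nonneg.mpr (Nat.floor_le hz0)
    have hr1 : r < 1 := by
      have := Nat.lt_floor_add_one z
      simp only [hrdef]; linarith
    set j : ℕ := ⌈r/d⌉₊ with hj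
    have hjK : j ≤ K := by
      rw [hj, hK]
      apply Nat.ceil_le_ceil
      gcongr
    have hjd : r ≤ (j:ℝ)*d := by
      have h7 : r/d ≤ (j:ℝ) := by rw [hj]; exact Nat.le_ceil _
      rw [div_le_iff₀ hdpos] at h7
      linarith
    have hjd2 : (j:ℝ)*d < r + d := by
      have h5 : (j:ℝ) < r/d + 1 := by
        rw [hj]; exact Nat.ceil_lt_add_one (by positivity)
      have h6 : (j:ℝ) * d < (r/d + 1) * d := mul_lt_mul_of_pos_right h5 hdpos
      rw [add_mul, div_mul_cancel₀ _ hdpos.ne'] at h6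
      linarith
    refine ⟨B + (j:ℝ)*d + (t:ℝ), grid j hjK t, ?_, ?_⟩
    · have : w = B + (t:ℝ) + r := by rw [hrdef, hz]; ring
      linarith
    · have : w = B + (t:ℝ) + r := by rw [hrdef, hz]; ring
      linarith
  have hev := htop.eventually_ge_atTop B
  rw [eventually_atTop] at hev
  obtain ⟨N₀, hN₀⟩ := hev
  refine ⟨N₀, fun n hn => ?_⟩
  have hBn : B ≤ a n := hN₀ n hn
  obtain ⟨p, hpΩ, hp1, hp2⟩ := cover (a n + d) (by linarith)
  rw [← hrange] at hpΩ
  obtain ⟨m, rfl⟩ := hpΩ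
  have hmn : n < m := hmono.lt_iff_lt.mp (by linarith)
  have hle : a (n+1) ≤ a m := hmono.monotone hmn
  have hgap : 0 < a (n+1) - a n := sub_pos.mpr (hmono n.lt_succ_self)
  rw [Real.dist_eq, sub_zero, abs_of_pos hgap]
  linarith

/-- The footprint of a normalized non-tempered ω-monoid is `{0, 1/k, …, (k-1)/k}` for
some positive integer `k`; in particular the monoid is contained in `(1/k)·ℕ`. -/
theorem footprint_of_not_tempered_is_cyclic
    (Ω : Set ℝ) (a : ℕ → ℝ)
    (hadd : ∀ x ∈ Ω, ∀ y ∈ Ω, x + y ∈ Ω)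
    (hmono : StrictMono a) (h0 : a 0 = 0) (hrange : Set.range a = Ω)
    (hone : 1 ∈ Ω) (hnorm : ∀ x ∈ Ω, x ≠ 0 → 1 ≤ x)
    (hnt : ¬ Tendsto (fun n => a (n + 1) - a n) atTop (𝓝 0)) :
    ∃ k : ℕ, 0 < k ∧
      Int.fract '' Ω = {x : ℝ | ∃ j : ℕ, j < k ∧ x = (j : ℝ) / (k : ℝ)} ∧
      Ω ⊆ {x : ℝ | ∃ n : ℕ, x = (n : ℝ) / (k : ℝ)} := by
  have hΩ0 : (0:ℝ) ∈ Ω := hrange ▸ ⟨0, h0⟩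
  have hnonneg : ∀ x ∈ Ω, 0 ≤ x := by
    intro x hx
    rw [← hrange] at hx
    obtain ⟨n, rfl⟩ := hx
    rw [← h0]; exact hmono.monotone (Nat.zero_le n)
  have hfin : (Int.fract '' Ω).Finite :=
    footprint_finite' Ω a hadd hmono h0 hrange hone hnorm hnt
  have hΔIco : Int.fract '' Ω ⊆ Set.Ico (0:ℝ) 1 := by
    rintro x ⟨y, -, rfl⟩
    exact ⟨Int.fract_nonneg y, Int.fract_lt_one y⟩
  have hΔ0 : (0:ℝ) ∈ Int.fract '' Ω := ⟨0, hΩ0, by simp⟩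
  have hΔcl : ∀ x ∈ Int.fract '' Ω, ∀ y ∈ Int.fract '' Ω,
      Int.fract (x + y) ∈ Int.fract '' Ω := by
    rintro x ⟨u, hu, rfl⟩ y ⟨v, hv, rfl⟩
    exact ⟨u + v, hadd u hu v hv, (fract_fract_add_fract u v).symm⟩
  obtain ⟨k, hk, hkeq⟩ := finite_fract_submonoid_cyclic _ hΔIco hΔ0 hΔcl hfin
  refine ⟨k, hk, hkeq, ?_⟩
  intro x hx
  have hfx : Int.fract x ∈ Int.fract '' Ω := ⟨x, hx, rfl⟩
  rw [hkeq] at hfx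
  obtain ⟨j, hjk, hjx⟩ := hfx
  refine ⟨k * ⌊x⌋.toNat + j, ?_⟩
  have hfl : ((⌊x⌋.toNat : ℕ):ℝ) = ((⌊x⌋:ℤ):ℝ) := by
    exact_mod_cast congrArg (Int.cast : ℤ → ℝ)
      (Int.toNat_of_nonneg (Int.floor_nonneg.mpr (hnonneg x hx)))
  have hknz : ((k:ℕ):ℝ) ≠ 0 := by
    have : (0:ℝ) < k := by exact_mod_cast hk
    linarith
  have hxeq : x = ((⌊x⌋:ℤ):ℝ) + (j:ℝ)/(k:ℝ) := by rw [← hjx, Int.fract]; ring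
  conv_lhs => rw [hxeq]
  push_cast [hfl]
  field_simp
end

section
/- An increasingly enumerable additive submonoid of the nonnegative rationals is a scalar multiple of a numerical semigroup if and only if it is finitely generated: if Ω ⊆ ℚ is an ω-monoid with at least one nonzero element, then there exist λ > 0 and a numerical semigroup S with Ω = {λ·s : s ∈ S} if and only if the minimal generating set G(Ω) = Ω* \ (Ω* + Ω*) is finite. -/
open Pointwise

private lemma natmul_mem' {M : AddSubmonoid ℕ} {x : ℕ} (hx : x ∈ M) (k : ℕ) : x * k ∈ M := by
  simpa [nsmul_eq_mul, mul_comm] using M.nsmul_mem hx k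

private lemma bezout_aux' (F : Finset ℝ) (f : ℝ → ℕ) :
    ∃ u v : ℕ, u ∈ AddSubmonoid.closure (f '' F) ∧ v ∈ AddSubmonoid.closure (f '' F) ∧
      (u : ℤ) - v = F.gcd f := by
  classical
  induction F using Finset.induction_on with
  | empty => exact ⟨0, 0, zero_mem _, zero_mem _, by simp⟩
  | @insert a F ha ih =>
    obtain ⟨u, v, hu, hv, huv⟩ := ih
    have hmono : AddSubmonoid.closure (f '' (F : Set ℝ)) ≤
        AddSubmonoid.closure (f '' ((insert a F : Finset ℝ) : Set ℝ)) := by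
      apply AddSubmonoid.closure_mono
      apply Set.image_mono
      simp [Set.subset_insert]
    have hfa : f a ∈ AddSubmonoid.closure (f '' ((insert a F : Finset ℝ) : Set ℝ)) := by
      apply AddSubmonoid.subset_closure
      exact ⟨a, by simp, rfl⟩
    have hu' := hmono hu
    have hv' := hmono hv
    set M := AddSubmonoid.closure (f '' ((insert a F : Finset ℝ) : Set ℝ))
    set A : ℤ := Nat.gcdA (f a) (F.gcd f)
    set B : ℤ := Nat.gcdB (f a) (F.gcd f)
    have hbez : (Nat.gcd (f a) (F.gcd f) : ℤ) = f a * A + F.gcd f * B := Nat.gcd_eq_gcd_ab _ _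
    refine ⟨f a * A.toNat + u * B.toNat + v * (-B).toNat,
            f a * (-A).toNat + u * (-B).toNat + v * B.toNat, ?_, ?_, ?_⟩
    · exact add_mem (add_mem (natmul_mem' hfa _) (natmul_mem' hu' _)) (natmul_mem' hv' _)
    · exact add_mem (add_mem (natmul_mem' hfa _) (natmul_mem' hu' _)) (natmul_mem' hv' _)
    · rw [Finset.gcd_insert]
      have hA : (A.toNat : ℤ) - ((-A).toNat : ℤ) = A := by omega
      have hB : (B.toNat : ℤ) - ((-B).toNat : ℤ) = B := by omega
      push_cast
      rw [show gcd (f a) (F.gcd f) = Nat.gcd (f a) (F.gcd f) from rfl, hbez]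
      linear_combination (f a : ℤ) * hA + ((u : ℤ) - v) * hB + B * huv

/-- If a submonoid of ℕ contains `u` and `v` with `u - v = 1`, it contains all `n ≥ v * v`. -/
private lemma eventually_mem' {M : AddSubmonoid ℕ} {u v : ℕ} (hu : u ∈ M) (hv : v ∈ M)
    (huv : (u : ℤ) - v = 1) : ∀ n, v * v ≤ n → n ∈ M := by
  intro n hn
  have hu1 : u = v + 1 := by omega
  rcases Nat.eq_zero_or_pos v with hv0 | hvpos
  · have : u = 1 := by omega
    subst this
    simpa using natmul_mem' hu n
  · set r := n % v with hr
    set q := n / v with hq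
    have hrv : r < v := Nat.mod_lt _ hvpos
    have hvq : v ≤ q := (Nat.le_div_iff_mul_le hvpos).mpr hn
    have hrq : r ≤ q := le_of_lt (lt_of_lt_of_le hrv hvq)
    have h1 : v * q + r = n := Nat.div_add_mod n v
    have key : u * r + v * (q - r) = n := by
      subst hu1
      have h1' : (v : ℤ) * q + r = n := by exact_mod_cast h1
      zify [hrq]
      linear_combination h1'
    rw [← key]
    exact add_mem (natmul_mem' hu r) (natmul_mem' hv (q - r))

/-- An increasingly enumerable additive submonoid of the nonnegative rationals is a
positive scalar multiple of a numerical semigroup iff its minimal generating set is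
finite. -/
theorem rational_omega_monoid_scaled_numerical_semigroup_iff_finitely_generated
    (Ω : Set ℝ) (a : ℕ → ℝ)
    (hrat : ∀ x ∈ Ω, ∃ q : ℚ, x = (q : ℝ))
    (hadd : ∀ x ∈ Ω, ∀ y ∈ Ω, x + y ∈ Ω)
    (hmono : StrictMono a) (h0 : a 0 = 0) (hrange : Set.range a = Ω)
    (hne : ∃ x ∈ Ω, x ≠ 0) :
    (∃ l : ℝ, 0 < l ∧ ∃ S : Set ℕ,
        (0 ∈ S ∧ (∀ x ∈ S, ∀ y ∈ S, x + y ∈ S) ∧ Sᶜ.Finite) ∧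
        Ω = (fun s : ℕ => l * (s : ℝ)) '' S) ↔
      ((Ω \ {0}) \ ((Ω \ {0}) + (Ω \ {0}))).Finite := by
  classical
  have h0Ω : (0 : ℝ) ∈ Ω := by rw [← hrange]; exact ⟨0, h0⟩
  have hpos : ∀ x ∈ Ω, 0 ≤ x := by
    intro x hx
    rw [← hrange] at hx
    obtain ⟨n, rfl⟩ := hx
    rw [← h0]
    exact hmono.monotone (Nat.zero_le n)
  set G : Set ℝ := (Ω \ {0}) \ ((Ω \ {0}) + (Ω \ {0})) with hG
  constructor
  · -- forward direction
    rintro ⟨l, hl, S, ⟨h0S, haddS, hScofin⟩, hΩS⟩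
    set B : ℕ := max (hScofin.toFinset.sup id + 1) 1 with hB
    have hB1 : 1 ≤ B := le_max_right _ _
    have hBS : ∀ m, B ≤ m → m ∈ S := by
      intro m hm
      by_contra hmS
      have : m ∈ hScofin.toFinset := hScofin.mem_toFinset.mpr hmS
      have := Finset.le_sup (f := id) this
      simp only [id] at this
      omega
    have hsub : G ⊆ (fun n : ℕ => l * (n : ℝ)) '' (Set.Iio (2 * B)) := by
      intro x hx
      obtain ⟨n, hnS, hn⟩ : ∃ n ∈ S, l * (n : ℝ) = x := by
        have := hΩS ▸ hx.1.1
        obtain ⟨n, hnS, hn⟩ := this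
        exact ⟨n, hnS, hn⟩
      by_cases hlt : n < 2 * B
      · exact ⟨n, hlt, hn⟩
      exfalso
      push_neg at hlt
      have hBn : B ≤ n := by omega
      have h1 : l * (B : ℝ) ∈ Ω \ {0} := by
        constructor
        · rw [hΩS]; exact ⟨B, hBS B le_rfl, rfl⟩
        · simp only [Set.mem_singleton_iff]
          have : (0:ℝ) < l * B := by positivity
          linarith
      have h2 : l * ((n - B : ℕ) : ℝ) ∈ Ω \ {0} := by
        constructor
        · rw [hΩS]; exact ⟨n - B, hBS (n - B) (by omega), rfl⟩
        · simp only [Set.mem_singleton_iff]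
          have hnB : (0:ℕ) < n - B := by omega
          have : (0:ℝ) < l * ((n - B : ℕ) : ℝ) := by positivity
          linarith
      have : x ∈ (Ω \ {0}) + (Ω \ {0}) := by
        rw [Set.mem_add]
        refine ⟨l * (B : ℝ), h1, l * ((n - B : ℕ) : ℝ), h2, ?_⟩
        rw [← hn]
        push_cast [Nat.cast_sub hBn]
        ring
      exact hx.2 this
    exact Set.Finite.subset ((Set.finite_Iio (2 * B)).image _) hsub
  · -- backward direction
    intro hfin
    -- every element of Ω is in the closure of G
    have hgen : ∀ n : ℕ, a n ∈ AddSubmonoid.closure G := by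
      intro n
      induction n using Nat.strong_induction_on with
      | _ n ih =>
        by_cases hz : a n = 0
        · rw [hz]; exact zero_mem _
        have hmem : a n ∈ Ω := by rw [← hrange]; exact ⟨n, rfl⟩
        by_cases hg : a n ∈ G
        · exact AddSubmonoid.subset_closure hg
        · have hsum : a n ∈ (Ω \ {0}) + (Ω \ {0}) := by
            by_contra hc
            exact hg ⟨⟨hmem, hz⟩, hc⟩
          rw [Set.mem_add] at hsum
          obtain ⟨y, hy, z, hz', hyz⟩ := hsum
          have hy0 : 0 < y := lt_of_le_of_ne (hpos y hy.1) (Ne.symm hy.2)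
          have hz0 : 0 < z := lt_of_le_of_ne (hpos z hz'.1) (Ne.symm hz'.2)
          obtain ⟨i, hi⟩ : y ∈ Set.range a := by rw [hrange]; exact hy.1
          obtain ⟨j, hj⟩ : z ∈ Set.range a := by rw [hrange]; exact hz'.1
          have hin : i < n := by
            rw [← hmono.lt_iff_lt]
            rw [hi]; linarith
          have hjn : j < n := by
            rw [← hmono.lt_iff_lt]
            rw [hj]; linarith
          rw [← hyz, ← hi, ← hj]
          exact add_mem (ih i hin) (ih j hjn)
    have hΩgen : ∀ x ∈ Ω, x ∈ AddSubmonoid.closure G := by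
      intro x hx
      rw [← hrange] at hx
      obtain ⟨n, rfl⟩ := hx
      exact hgen n
    -- G is nonempty
    have hGne : G.Nonempty := by
      by_contra hc
      rw [Set.not_nonempty_iff_eq_empty] at hc
      obtain ⟨x, hx, hx0⟩ := hne
      have := hΩgen x hx
      rw [hc, AddSubmonoid.closure_empty, AddSubmonoid.mem_bot] at this
      exact hx0 this
    set F : Finset ℝ := hfin.toFinset with hF
    have hFmem : ∀ x, x ∈ F ↔ x ∈ G := fun x => hfin.mem_toFinset
    have hFne : F.Nonempty := by
      obtain ⟨x, hx⟩ := hGne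
      exact ⟨x, (hFmem x).mpr hx⟩
    have hGΩ : ∀ x ∈ G, x ∈ Ω := fun x hx => hx.1.1
    have hGpos : ∀ x ∈ G, 0 < x := fun x hx =>
      lt_of_le_of_ne (hpos x hx.1.1) (Ne.symm hx.1.2)
    -- rational structure
    set q : ℝ → ℚ := fun x => if h : ∃ r : ℚ, x = (r : ℝ) then h.choose else 0 with hqdef
    have hq : ∀ x ∈ Ω, x = (q x : ℝ) := by
      intro x hx
      have h := hrat x hx
      simp only [hqdef, dif_pos h]
      exact h.choose_spec
    set d : ℕ := F.prod fun y => (q y).den with hd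
    have hdpos : 0 < d := Finset.prod_pos fun y _ => (q y).pos
    have hdvd : ∀ x ∈ F, (q x).den ∣ d := fun x hx => Finset.dvd_prod_of_mem _ hx
    set nn : ℝ → ℕ := fun x => (q x).num.toNat * (d / (q x).den) with hnn
    have key : ∀ x ∈ F, (nn x : ℝ) = x * d := by
      intro x hx
      have hxG : x ∈ G := (hFmem x).mp hx
      have hxΩ : x ∈ Ω := hGΩ x hxG
      have hxpos : 0 < x := hGpos x hxG
      have hxq : x = (q x : ℝ) := hq x hxΩ
      have hqpos : 0 < q x := by
        rw [hxq] at hxpos; exact_mod_cast hxpos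
      have hnum : 0 ≤ (q x).num := le_of_lt (Rat.num_pos.mpr hqpos)
      have hden : ((q x).den : ℝ) ≠ 0 := by positivity
      have hdd : (q x).den * (d / (q x).den) = d := Nat.mul_div_cancel' (hdvd x hx)
      have hnnx : nn x = (q x).num.toNat * (d / (q x).den) := rfl
      rw [hnnx]
      conv_rhs => rw [hxq, Rat.cast_def]
      push_cast [Int.toNat_of_nonneg hnum]
      rw [Nat.cast_div (hdvd x hx) hden]
      have htn : ((q x).num.toNat : ℝ) = ((q x).num : ℝ) := by
        exact_mod_cast congrArg (Int.cast : ℤ → ℝ) (Int.toNat_of_nonneg hnum)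
      rw [htn]
      ring
    have hnpos : ∀ x ∈ F, 0 < nn x := by
      intro x hx
      have hxpos : 0 < x := hGpos x ((hFmem x).mp hx)
      have : (0:ℝ) < (nn x : ℝ) := by
        rw [key x hx]; positivity
      exact_mod_cast this
    set g : ℕ := F.gcd nn with hg
    have hgpos : 0 < g := by
      rcases Nat.eq_zero_or_pos g with h | h
      · exfalso
        obtain ⟨x, hx⟩ := hFne
        have := Finset.gcd_eq_zero_iff.mp h x hx
        exact absurd this (Nat.pos_iff_ne_zero.mp (hnpos x hx))
      · exact h
    obtain ⟨s, hs_eq, hs_gcd⟩ := Finset.extract_gcd nn hFne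
    set l : ℝ := (g : ℝ) / d with hl
    have hlpos : 0 < l := by positivity
    have hxl : ∀ x ∈ F, x = l * (s x : ℝ) := by
      intro x hx
      have h1 : (nn x : ℝ) = x * d := key x hx
      have h2 : nn x = g * s x := hs_eq x hx
      rw [h2] at h1
      push_cast at h1
      rw [hl]
      field_simp
      linarith [h1]
    -- the monoid of scaled elements
    set M := AddSubmonoid.closure (s '' (F : Set ℝ)) with hM
    obtain ⟨u, v, hu, hv, huv⟩ := bezout_aux' F s
    rw [hs_gcd] at huv
    have hMΩ : ∀ m : ℕ, m ∈ M → (l * (m : ℝ)) ∈ Ω := by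
      intro m hm
      induction hm using AddSubmonoid.closure_induction with
      | mem x hx =>
        obtain ⟨y, hy, rfl⟩ := hx
        rw [← hxl y hy]
        exact hGΩ y ((hFmem y).mp hy)
      | zero => simpa using h0Ω
      | add x y hx hy ihx ihy =>
        have : l * ((x + y : ℕ) : ℝ) = l * x + l * y := by push_cast; ring
        rw [this]
        exact hadd _ ihx _ ihy
    set S : Set ℕ := {m : ℕ | (l * (m : ℝ)) ∈ Ω} with hS
    refine ⟨l, hlpos, S, ⟨?_, ?_, ?_⟩, ?_⟩
    · simpa [hS] using h0Ω
    · intro x hx y hy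
      have : l * ((x + y : ℕ) : ℝ) = l * x + l * y := by push_cast; ring
      simp only [hS, Set.mem_setOf_eq] at *
      rw [this]
      exact hadd _ hx _ hy
    · apply Set.Finite.subset (Set.finite_Iio (v * v))
      intro m hm
      simp only [Set.mem_compl_iff, hS, Set.mem_setOf_eq] at hm
      by_contra hc
      simp only [Set.mem_Iio, not_lt] at hc
      exact hm (hMΩ m (eventually_mem' hu hv (by exact_mod_cast huv) m hc))
    · ext x
      constructor
      · intro hx
        have hrep : ∀ y, y ∈ AddSubmonoid.closure G → ∃ m : ℕ, y = l * (m : ℝ) := by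
          intro y' hy'
          induction hy' using AddSubmonoid.closure_induction with
          | mem y hy =>
            have hyF : y ∈ F := (hFmem y).mpr hy
            exact ⟨s y, hxl y hyF⟩
          | zero => exact ⟨0, by simp⟩
          | add y z hy hz ihy ihz =>
            obtain ⟨m1, hm1⟩ := ihy
            obtain ⟨m2, hm2⟩ := ihz
            exact ⟨m1 + m2, by rw [hm1, hm2]; push_cast; ring⟩
        obtain ⟨m, hm⟩ := hrep x (hΩgen x hx)
        refine ⟨m, ?_, hm.symm⟩
        simp only [hS, Set.mem_setOf_eq]
        rw [← hm]; exact hx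
      · rintro ⟨m, hm, rfl⟩
        exact hm
end

section
/- The Pythagorean monoid P = {i + j·log₂ 3 : i, j ∈ ℕ} is a tempered monoid: it contains 0, is closed under addition, P ∩ [0, x] is finite for every real x (so P admits a strictly increasing enumeration (a_n) with a(0) = 0), and a(n+1) − a(n) → 0 as n → ∞. -/
open Filter Topology

noncomputable def PL : ℝ := Real.logb 2 3

def PP : Set ℝ := {x : ℝ | ∃ i j : ℕ, x = (i : ℝ) + (j : ℝ) * PL}

lemma one_lt_PL : 1 < PL := by
  have h := Real.logb_lt_logb (b := 2) one_lt_two two_pos (by norm_num : (2:ℝ) < 3)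
  simpa [PL, Real.logb_self_eq_one] using h

lemma PL_pos : 0 < PL := lt_trans one_pos one_lt_PL

lemma irr_PL : Irrational PL := by
  rintro ⟨q, hq⟩
  have hq' : (q : ℝ) = Real.logb 2 3 := hq
  have h2 : (2:ℝ) ^ (q:ℝ) = 3 := by
    rw [hq']; exact Real.rpow_logb (by norm_num) (by norm_num) (by norm_num)
  have hqpos : 0 < q := by
    have : (0:ℝ) < (q:ℝ) := by rw [hq']; exact PL_pos
    exact_mod_cast this
  have hnum : 0 < q.num := Rat.num_pos.2 hqpos
  set n : ℕ := q.num.toNat with hn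
  set d : ℕ := q.den with hd
  have hqd : (q:ℝ) * (d:ℝ) = (n:ℝ) := by
    have h1 : (q * (q.den:ℚ) : ℚ) = (q.num : ℚ) := by rw [Rat.mul_den_eq_num]
    have h' : (q:ℝ) * (q.den:ℝ) = ((q.num:ℤ):ℝ) := by exact_mod_cast congrArg (fun x : ℚ => (x:ℝ)) h1
    have h'' : ((n:ℕ):ℝ) = ((q.num:ℤ):ℝ) := by
      exact_mod_cast congrArg (fun z : ℤ => (z:ℝ)) (Int.toNat_of_nonneg hnum.le)
    rw [h'', hd]; exact h'
  have key : (2:ℝ) ^ (n:ℕ) = (3:ℝ) ^ (d:ℕ) := by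
    have hstep : (2:ℝ) ^ ((q:ℝ) * (d:ℝ)) = (3:ℝ) ^ ((d:ℕ):ℝ) := by
      rw [Real.rpow_mul (by norm_num : (0:ℝ) ≤ 2), h2]
    rw [hqd] at hstep
    rw [Real.rpow_natCast, Real.rpow_natCast] at hstep
    exact hstep
  have keyN : (2:ℕ) ^ n = 3 ^ d := by exact_mod_cast key
  have hn1 : 1 ≤ n := by omega
  have h2dvd : 2 ∣ 3 ^ d := by
    rw [← keyN]; exact dvd_pow_self 2 (by omega)
  have := Nat.Prime.dvd_of_dvd_pow Nat.prime_two h2dvd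
  omega

lemma PP_nonneg {x : ℝ} (hx : x ∈ PP) : 0 ≤ x := by
  obtain ⟨i, j, rfl⟩ := hx
  exact add_nonneg (Nat.cast_nonneg i) (mul_nonneg (Nat.cast_nonneg j) PL_pos.le)

lemma nat_mem_PP (n : ℕ) : (n : ℝ) ∈ PP := ⟨n, 0, by simp⟩

lemma add_mem_PP {x y : ℝ} (hx : x ∈ PP) (hy : y ∈ PP) : x + y ∈ PP := by
  obtain ⟨i, j, rfl⟩ := hx; obtain ⟨i', j', rfl⟩ := hy
  exact ⟨i + i', j + j', by push_cast; ring⟩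

lemma fin_PP (x : ℝ) : (PP ∩ Set.Icc 0 x).Finite := by
  have hsub : PP ∩ Set.Icc 0 x ⊆
      (fun p : ℕ × ℕ => (p.1 : ℝ) + (p.2 : ℝ) * PL) '' (Set.Iic ⌈x⌉₊ ×ˢ Set.Iic ⌈x⌉₊) := by
    rintro y ⟨⟨i, j, rfl⟩, h0, hx'⟩
    refine ⟨(i, j), ⟨?_, ?_⟩, rfl⟩
    · have hj : (0:ℝ) ≤ (j:ℝ) := Nat.cast_nonneg j
      have : (i : ℝ) ≤ x := by nlinarith [PL_pos]
      exact Set.mem_Iic.2 (by exact_mod_cast this.trans (Nat.le_ceil x))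
    · have hj : (0:ℝ) ≤ (j:ℝ) := Nat.cast_nonneg j
      have hi : (0:ℝ) ≤ (i:ℝ) := Nat.cast_nonneg i
      have : (j : ℝ) ≤ x := by nlinarith [one_lt_PL]
      exact Set.mem_Iic.2 (by exact_mod_cast this.trans (Nat.le_ceil x))
  exact (((Set.finite_Iic _).prod (Set.finite_Iic _)).image _).subset hsub

lemma exists_small {ε : ℝ} (hε : 0 < ε) : ∃ i j : ℤ, 0 < (i:ℝ) + (j:ℝ) * PL ∧ (i:ℝ) + (j:ℝ) * PL < ε := by
  set S : AddSubgroup ℝ := AddSubgroup.closure {1, PL} with hS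
  rcases S.dense_or_cyclic with hd | ⟨c, hc⟩
  · obtain ⟨g, hgS, hg⟩ := hd.exists_mem_open isOpen_Ioo (Set.nonempty_Ioo.2 hε)
    rw [hS, SetLike.mem_coe, AddSubgroup.mem_closure_pair] at hgS
    obtain ⟨m, n, hmn⟩ := hgS
    refine ⟨m, n, ?_, ?_⟩
    · have : (m:ℝ) + (n:ℝ) * PL = g := by rw [← hmn]; push_cast [zsmul_eq_mul]; ring
      rw [this]; exact hg.1
    · have : (m:ℝ) + (n:ℝ) * PL = g := by rw [← hmn]; push_cast [zsmul_eq_mul]; ring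
      rw [this]; exact hg.2
  · exfalso
    have h1 : (1:ℝ) ∈ S := AddSubgroup.subset_closure (by simp)
    have hL : PL ∈ S := AddSubgroup.subset_closure (by simp)
    rw [hc, AddSubgroup.mem_closure_singleton] at h1 hL
    obtain ⟨m, hm⟩ := h1
    obtain ⟨n, hn⟩ := hL
    have hm0 : m ≠ 0 := by rintro rfl; simp at hm
    have hc0 : c ≠ 0 := by rintro rfl; simp at hm
    apply irr_PL
    refine ⟨(n : ℚ) / (m : ℚ), ?_⟩
    have : PL = (n : ℝ) * c := by rw [← hn]; push_cast [zsmul_eq_mul]; ring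
    have hmc : (m : ℝ) * c = 1 := by rw [← hm]; push_cast [zsmul_eq_mul]; ring
    have hmR : (m:ℝ) ≠ 0 := by exact_mod_cast hm0
    have hcval : c = 1 / (m:ℝ) := by field_simp at hmc ⊢; linarith [hmc]
    rw [this, hcval]
    push_cast
    field_simp

lemma zero_mem_PP : (0:ℝ) ∈ PP := by simpa using nat_mem_PP 0

lemma dense_PP {ε : ℝ} (hε : 0 < ε) :
    ∃ N : ℝ, ∀ y : ℝ, N ≤ y → ∃ p ∈ PP, y ≤ p ∧ p ≤ y + ε := by
  obtain ⟨i, j, hg0, hgε⟩ := exists_small hε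
  set g : ℝ := (i:ℝ) + (j:ℝ) * PL with hgdef
  set K : ℕ := ⌈1 / g⌉₊ with hK
  set M : ℕ := (K + 1) * (i.natAbs + j.natAbs) with hM
  refine ⟨(M : ℝ) * (1 + PL), fun y hy => ?_⟩
  set N : ℝ := (M : ℝ) * (1 + PL)
  set t : ℝ := y - N with ht
  have ht0 : 0 ≤ t := by simp [ht]; linarith
  set m : ℕ := ⌊t⌋₊ with hm
  set f : ℝ := t - m with hf
  have hf0 : 0 ≤ f := by
    have := Nat.floor_le ht0; simp [hf]; linarith
  have hf1 : f ≤ 1 := by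
    have := (Nat.lt_floor_add_one t).le; simp [hf]; linarith
  set k : ℕ := ⌈f / g⌉₊ with hk
  have hkK : k ≤ K := Nat.ceil_le_ceil ((div_le_div_iff_of_pos_right hg0).2 hf1)
  have hkg_ge : f ≤ (k:ℝ) * g := by
    have h1 : f / g ≤ (k:ℝ) := Nat.le_ceil (f / g)
    calc f = (f / g) * g := by field_simp
    _ ≤ (k:ℝ) * g := mul_le_mul_of_nonneg_right h1 hg0.le
  have hkg_lt : (k:ℝ) * g < f + g := by
    have h1 : (k:ℝ) < f / g + 1 := Nat.ceil_lt_add_one (div_nonneg hf0 hg0.le)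
    have := mul_lt_mul_of_pos_right h1 hg0
    calc (k:ℝ) * g < (f / g + 1) * g := this
    _ = f + g := by field_simp
  -- the candidate point
  set p : ℝ := N + m + (k:ℝ) * g with hp
  have hyp : y ≤ p := by
    have : y = N + t := by simp [ht]
    rw [this, hp]
    have : t = (m:ℝ) + f := by simp [hf]
    rw [this]; linarith
  have hpy : p ≤ y + ε := by
    have hy' : y = N + (m:ℝ) + f := by simp only [hf, ht]; ring
    rw [hp, hy']; linarith
  -- membership in PP
  have hIZ : (0:ℤ) ≤ (M:ℤ) + (m:ℤ) + (k:ℤ) * i := by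
    have h1 : (k:ℤ) * i ≥ -((K:ℤ) * i.natAbs) := by
      have hk' : (k:ℤ) ≤ (K:ℤ) := by exact_mod_cast hkK
      have habs : -(i.natAbs : ℤ) ≤ i := by
        rw [Int.natCast_natAbs]; exact neg_abs_le i
      nlinarith [Int.natCast_nonneg i.natAbs, Int.natCast_nonneg k,
        Int.natCast_natAbs i ▸ (abs_nonneg i), (le_abs_self i),
        Int.natCast_natAbs i]
    have h2 : (K:ℤ) * i.natAbs ≤ (M:ℤ) := by
      have : (M:ℤ) = ((K:ℤ) + 1) * (i.natAbs + j.natAbs) := by push_cast [hM]; ring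
      nlinarith [Int.natCast_nonneg i.natAbs, Int.natCast_nonneg j.natAbs,
        Int.natCast_nonneg K]
    have : (0:ℤ) ≤ (m:ℤ) := Int.natCast_nonneg m
    linarith
  have hJZ : (0:ℤ) ≤ (M:ℤ) + (k:ℤ) * j := by
    have h1 : (k:ℤ) * j ≥ -((K:ℤ) * j.natAbs) := by
      have hk' : (k:ℤ) ≤ (K:ℤ) := by exact_mod_cast hkK
      have habs : -(j.natAbs : ℤ) ≤ j := by
        rw [Int.natCast_natAbs]; exact neg_abs_le j
      nlinarith [Int.natCast_nonneg j.natAbs, Int.natCast_nonneg k,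
        Int.natCast_natAbs j ▸ (abs_nonneg j), (le_abs_self j), Int.natCast_natAbs j]
    have h2 : (K:ℤ) * j.natAbs ≤ (M:ℤ) := by
      have : (M:ℤ) = ((K:ℤ) + 1) * (i.natAbs + j.natAbs) := by push_cast [hM]; ring
      nlinarith [Int.natCast_nonneg i.natAbs, Int.natCast_nonneg j.natAbs,
        Int.natCast_nonneg K]
    linarith
  refine ⟨p, ⟨((M:ℤ) + (m:ℤ) + (k:ℤ) * i).toNat, ((M:ℤ) + (k:ℤ) * j).toNat, ?_⟩, hyp, hpy⟩
  have c1 : ((((M:ℤ) + (m:ℤ) + (k:ℤ) * i).toNat : ℕ) : ℝ) = (M:ℝ) + (m:ℝ) + (k:ℝ) * (i:ℝ) := by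
    have := Int.toNat_of_nonneg hIZ
    have h' : ((((M:ℤ) + (m:ℤ) + (k:ℤ) * i).toNat : ℤ) : ℝ) = (((M:ℤ) + (m:ℤ) + (k:ℤ) * i : ℤ) : ℝ) := by
      exact_mod_cast congrArg (fun z : ℤ => (z:ℝ)) this
    push_cast at h' ⊢
    linarith [h']
  have c2 : ((((M:ℤ) + (k:ℤ) * j).toNat : ℕ) : ℝ) = (M:ℝ) + (k:ℝ) * (j:ℝ) := by
    have := Int.toNat_of_nonneg hJZ
    have h' : ((((M:ℤ) + (k:ℤ) * j).toNat : ℤ) : ℝ) = (((M:ℤ) + (k:ℤ) * j : ℤ) : ℝ) := by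
      exact_mod_cast congrArg (fun z : ℤ => (z:ℝ)) this
    push_cast at h' ⊢
    linarith [h']
  rw [c1, c2, hp, hgdef]
  simp only [N]
  ring

lemma exists_next (s : ℝ) : ∃ w, w ∈ PP ∧ s < w ∧ ∀ q ∈ PP, s < q → w ≤ q := by
  set B : ℝ := (⌈max s 0⌉₊ : ℝ) + 1 with hB
  have hBs : s < B := by
    have := Nat.le_ceil (max s 0)
    have h1 : s ≤ max s 0 := le_max_left _ _
    linarith
  have hBmem : B ∈ PP := by
    have := nat_mem_PP (⌈max s 0⌉₊ + 1)
    simpa [hB] using this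
  set F : Set ℝ := PP ∩ Set.Icc 0 B ∩ Set.Ioi s with hF
  have hFfin : F.Finite := ((fin_PP B).inter_of_left _)
  have hFne : F.Nonempty := by
    refine ⟨B, ⟨⟨hBmem, ?_, le_rfl⟩, hBs⟩⟩
    exact PP_nonneg hBmem
  obtain ⟨w, hwF, hwmin⟩ := Set.exists_min_image F id hFfin hFne
  refine ⟨w, hwF.1.1, hwF.2, fun q hq hsq => ?_⟩
  by_cases hqB : q ≤ B
  · exact hwmin q ⟨⟨hq, PP_nonneg hq, hqB⟩, hsq⟩
  · have : w ≤ B := hwF.1.2.2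
    linarith
noncomputable def nxt (s : ℝ) : ℝ := (exists_next s).choose

lemma nxt_mem (s : ℝ) : nxt s ∈ PP := (exists_next s).choose_spec.1
lemma lt_nxt (s : ℝ) : s < nxt s := (exists_next s).choose_spec.2.1
lemma nxt_min (s : ℝ) {q : ℝ} (hq : q ∈ PP) (h : s < q) : nxt s ≤ q :=
  (exists_next s).choose_spec.2.2 q hq h

noncomputable def seqA : ℕ → ℝ
  | 0 => 0
  | n + 1 => nxt (seqA n)

lemma seqA_mem (n : ℕ) : seqA n ∈ PP := by
  cases n with
  | zero => exact zero_mem_PP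
  | succ n => exact nxt_mem _

lemma seqA_mono : StrictMono seqA := strictMono_nat_of_lt_succ (fun n => lt_nxt _)

lemma seqA_surj : ∀ p ∈ PP, ∃ n, seqA n = p := by
  intro p hp
  obtain ⟨c, hc⟩ : ∃ c, (fin_PP p).toFinset.card = c := ⟨_, rfl⟩
  induction c using Nat.strong_induction_on generalizing p with
  | _ c ih =>
    rcases eq_or_lt_of_le (PP_nonneg hp) with h0 | h0
    · exact ⟨0, h0⟩
    -- p > 0, take the predecessor
    have hQfin : (PP ∩ Set.Icc 0 p ∩ Set.Iio p).Finite := (fin_PP p).inter_of_left _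
    have hQne : (PP ∩ Set.Icc 0 p ∩ Set.Iio p).Nonempty :=
      ⟨0, ⟨zero_mem_PP, le_rfl, h0.le⟩, h0⟩
    obtain ⟨q, hqQ, hqmax⟩ := Set.exists_max_image _ id hQfin hQne
    have hqP : q ∈ PP := hqQ.1.1
    have hqp : q < p := hqQ.2
    -- q has smaller card
    have hsub : (fin_PP q).toFinset ⊂ (fin_PP p).toFinset := by
      rw [Set.Finite.toFinset_ssubset_toFinset]
      constructor
      · exact Set.inter_subset_inter_right _ (Set.Icc_subset_Icc le_rfl hqp.le)
      · intro hcontra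
        have hpmem : p ∈ PP ∩ Set.Icc 0 p := ⟨hp, PP_nonneg hp, le_rfl⟩
        have := hcontra hpmem
        exact absurd this.2.2 (not_le.2 hqp)
    have hcard : (fin_PP q).toFinset.card < c := hc ▸ Finset.card_lt_card hsub
    obtain ⟨n, hn⟩ := ih _ hcard q hqP rfl
    refine ⟨n + 1, ?_⟩
    have h1 : seqA (n+1) ≤ p := by
      show nxt (seqA n) ≤ p
      rw [hn]; exact nxt_min q hp hqp
    have h2 : q < seqA (n+1) := by
      show q < nxt (seqA n); rw [hn]; exact lt_nxt q
    rcases eq_or_lt_of_le h1 with h | h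
    · exact h
    · exfalso
      have : seqA (n+1) ∈ PP ∩ Set.Icc 0 p ∩ Set.Iio p :=
        ⟨⟨seqA_mem _, PP_nonneg (seqA_mem _), h.le⟩, h⟩
      have := hqmax _ this
      simp only [id] at this
      exact absurd h2 (not_lt.2 this)

lemma seqA_range : Set.range seqA = PP := by
  apply Set.eq_of_subset_of_subset
  · rintro _ ⟨n, rfl⟩; exact seqA_mem n
  · intro p hp; obtain ⟨n, hn⟩ := seqA_surj p hp; exact ⟨n, hn⟩

lemma seqA_tendsto : Tendsto (fun n => seqA (n + 1) - seqA n) atTop (𝓝 0) := by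
  rw [Metric.tendsto_atTop]
  intro ε hε
  obtain ⟨N, hN⟩ := dense_PP (show (0:ℝ) < ε / 3 by linarith)
  -- find n₀ with seqA n > N for n ≥ n₀
  have hfin : {n : ℕ | seqA n ≤ N}.Finite := by
    apply Set.Finite.subset ((fin_PP N).preimage (seqA_mono.injective.injOn))
    intro n hn
    exact ⟨seqA_mem n, PP_nonneg (seqA_mem n), hn⟩
  obtain ⟨n₀, hn₀⟩ := hfin.bddAbove
  refine ⟨n₀ + 1, fun n hn => ?_⟩
  have hNa : N < seqA n := by
    by_contra hcon
    push_neg at hcon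
    have := hn₀ hcon
    omega
  obtain ⟨p, hpP, hp1, hp2⟩ := hN (seqA n + ε / 3) (by linarith)
  have h1 : seqA (n+1) ≤ p := nxt_min (seqA n) hpP (by linarith)
  have h2 : seqA n < seqA (n+1) := lt_nxt _
  rw [Real.dist_eq, sub_zero, abs_of_pos (by linarith : (0:ℝ) < seqA (n+1) - seqA n)]
  linarith

/-- The Pythagorean monoid `P = {i + j·log₂ 3 : i, j ∈ ℕ}` is a tempered monoid. -/
theorem pythagorean_monoid_is_tempered :
    (0 : ℝ) ∈ {x : ℝ | ∃ i j : ℕ, x = (i : ℝ) + (j : ℝ) * Real.logb 2 3} ∧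
    (∀ x ∈ {x : ℝ | ∃ i j : ℕ, x = (i : ℝ) + (j : ℝ) * Real.logb 2 3},
      ∀ y ∈ {x : ℝ | ∃ i j : ℕ, x = (i : ℝ) + (j : ℝ) * Real.logb 2 3},
        x + y ∈ {x : ℝ | ∃ i j : ℕ, x = (i : ℝ) + (j : ℝ) * Real.logb 2 3}) ∧
    (∀ x : ℝ, ({x : ℝ | ∃ i j : ℕ, x = (i : ℝ) + (j : ℝ) * Real.logb 2 3} ∩
      Set.Icc 0 x).Finite) ∧
    ∃ a : ℕ → ℝ, StrictMono a ∧ a 0 = 0 ∧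
      Set.range a = {x : ℝ | ∃ i j : ℕ, x = (i : ℝ) + (j : ℝ) * Real.logb 2 3} ∧
      Tendsto (fun n => a (n + 1) - a n) atTop (𝓝 0) := by
  have hPP : {x : ℝ | ∃ i j : ℕ, x = (i : ℝ) + (j : ℝ) * Real.logb 2 3} = PP := rfl
  rw [hPP]
  exact ⟨zero_mem_PP, fun x hx y hy => add_mem_PP hx hy, fin_PP,
    ⟨seqA, seqA_mono, rfl, seqA_range, seqA_tendsto⟩⟩
end

section
/- The set Q = {0} ∪ {n + k/2^(n+1) : n ∈ ℕ, n ≥ 1, 0 ≤ k ≤ 2^(n+1) − 1} is a tempered monoid: it contains 0, is closed under addition, Q ∩ [0, x] is finite for every real x (so Q admits a strictly increasing enumeration (a_n) with a(0) = 0), and a(n+1) − a(n) → 0 as n → ∞. -/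
open Filter Topology

noncomputable def Qa : ℕ → ℝ := fun i =>
  if i = 0 then 0 else
    (Nat.log 2 (i + 3) : ℝ) - 2 + ((i : ℝ) + 3) / 2 ^ (Nat.log 2 (i + 3))

lemma Qa_zero : Qa 0 = 0 := by simp [Qa]

lemma Qa_eval (i : ℕ) (hi : i ≠ 0) :
    Qa i = (Nat.log 2 (i + 3) : ℝ) - 2 + ((i : ℝ) + 3) / 2 ^ (Nat.log 2 (i + 3)) := by
  simp [Qa, hi]

lemma Qa_log_facts (i : ℕ) (hi : 1 ≤ i) :
    2 ≤ Nat.log 2 (i + 3) ∧ 2 ^ Nat.log 2 (i + 3) ≤ i + 3 ∧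
      i + 3 < 2 ^ (Nat.log 2 (i + 3) + 1) := by
  refine ⟨?_, Nat.pow_log_le_self 2 (by omega), Nat.lt_pow_succ_log_self (by norm_num) _⟩
  have h4 : Nat.log 2 4 = 2 := by
    rw [show (4:ℕ) = 2 ^ 2 by norm_num, Nat.log_pow (by norm_num)]
  have : Nat.log 2 4 ≤ Nat.log 2 (i + 3) := Nat.log_mono_right (by omega)
  omega

lemma Qa_index (n k : ℕ) (hn : 1 ≤ n) (hk : k ≤ 2 ^ (n + 1) - 1) :
    Qa (2 ^ (n + 1) - 3 + k) = (n : ℝ) + (k : ℝ) / 2 ^ (n + 1) := by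
  have h4 : 4 ≤ 2 ^ (n + 1) := by
    calc (4:ℕ) = 2 ^ 2 := by norm_num
    _ ≤ 2 ^ (n + 1) := Nat.pow_le_pow_right (by norm_num) (by omega)
  have hi : 2 ^ (n + 1) - 3 + k + 3 = 2 ^ (n + 1) + k := by omega
  have hlog : Nat.log 2 (2 ^ (n + 1) - 3 + k + 3) = n + 1 := by
    rw [hi]
    refine Nat.log_eq_of_pow_le_of_lt_pow (by omega) ?_
    have : 2 ^ (n + 2) = 2 ^ (n + 1) + 2 ^ (n + 1) := by ring
    omega
  rw [Qa_eval _ (by omega), hlog]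
  have hc : ((2 ^ (n + 1) - 3 + k : ℕ) : ℝ) = 2 ^ (n + 1) + (k : ℝ) - 3 := by
    push_cast [Nat.cast_sub (show 3 ≤ 2 ^ (n + 1) by omega)]
    ring
  rw [hc]
  have h2 : (0:ℝ) < 2 ^ (n + 1) := by positivity
  push_cast
  field_simp
  ring

lemma Qa_diff (i : ℕ) (hi : 1 ≤ i) :
    Qa (i + 1) - Qa i = ((2:ℝ) ^ Nat.log 2 (i + 3))⁻¹ := by
  obtain ⟨hm2, hle, hlt⟩ := Qa_log_facts i hi
  set m := Nat.log 2 (i + 3) with hm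
  have h2 : (0:ℝ) < 2 ^ m := by positivity
  rcases eq_or_lt_of_le (show i + 4 ≤ 2 ^ (m + 1) by omega) with heq | hlt'
  · have hlog' : Nat.log 2 (i + 1 + 3) = m + 1 := by
      rw [show i + 1 + 3 = 2 ^ (m + 1) by omega, Nat.log_pow (by norm_num)]
    rw [Qa_eval _ (by omega), Qa_eval _ (by omega), hlog', ← hm]
    have h4 : ((i:ℝ) + 1 + 3) = 2 ^ (m + 1) := by
      have : ((i + 4 : ℕ) : ℝ) = ((2 ^ (m + 1) : ℕ) : ℝ) := by rw [heq]
      push_cast at this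
      linarith
    push_cast
    rw [show ((i:ℝ) + 1 + 3) = 2 ^ (m+1) from h4, show ((i:ℝ) + 3) = 2 ^ (m+1) - 1 by linarith]
    field_simp
    ring
  · have hlog' : Nat.log 2 (i + 1 + 3) = m := by
      refine Nat.log_eq_of_pow_le_of_lt_pow (by omega) (by omega)
    rw [Qa_eval _ (by omega), Qa_eval _ (by omega), hlog', ← hm]
    push_cast
    field_simp
    ring

lemma Qa_one : Qa 1 = 1 := by
  have h4 : Nat.log 2 4 = 2 := by
    rw [show (4:ℕ) = 2 ^ 2 by norm_num, Nat.log_pow (by norm_num)]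
  rw [Qa_eval 1 (by omega)]
  norm_num [h4]

lemma Qa_mono : StrictMono Qa := by
  apply strictMono_nat_of_lt_succ
  intro i
  rcases Nat.eq_zero_or_pos i with rfl | hi
  · rw [Qa_zero, Qa_one]; norm_num
  · have := Qa_diff i hi
    have h2 : (0:ℝ) < ((2:ℝ) ^ Nat.log 2 (i + 3))⁻¹ := by positivity
    linarith

def Qset : Set ℝ := {0} ∪ {x : ℝ | ∃ n k : ℕ, 1 ≤ n ∧ k ≤ 2 ^ (n + 1) - 1 ∧
  x = (n : ℝ) + (k : ℝ) / 2 ^ (n + 1)}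

lemma Qa_mem (i : ℕ) : Qa i ∈ Qset := by
  rcases Nat.eq_zero_or_pos i with rfl | hi
  · exact Or.inl (by simp [Qa_zero])
  obtain ⟨hm2, hle, hlt⟩ := Qa_log_facts i hi
  set m := Nat.log 2 (i + 3) with hm
  have hp : 2 ^ (m + 1) = 2 * 2 ^ m := by ring
  refine Or.inr ⟨m - 1, i + 3 - 2 ^ m, by omega, ?_, ?_⟩
  · rw [show m - 1 + 1 = m by omega]; omega
  · rw [Qa_eval i (by omega), ← hm, show m - 1 + 1 = m by omega]
    push_cast [Nat.cast_sub hle, Nat.cast_sub (show 1 ≤ m by omega)]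
    have h2 : (0:ℝ) < 2 ^ m := by positivity
    field_simp
    ring

lemma range_Qa : Set.range Qa = Qset := by
  ext x
  constructor
  · rintro ⟨i, rfl⟩; exact Qa_mem i
  · rintro (rfl | ⟨n, k, hn, hk, rfl⟩)
    · exact ⟨0, Qa_zero⟩
    · exact ⟨2 ^ (n + 1) - 3 + k, Qa_index n k hn hk⟩

lemma add_rep (n1 k1 n2 k2 : ℕ) (h1 : 1 ≤ n1) (hk1 : k1 ≤ 2 ^ (n1 + 1) - 1)
    (h2 : 1 ≤ n2) (hk2 : k2 ≤ 2 ^ (n2 + 1) - 1) :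
    ∃ n k : ℕ, 1 ≤ n ∧ k ≤ 2 ^ (n + 1) - 1 ∧
      ((n1 : ℝ) + (k1 : ℝ) / 2 ^ (n1 + 1)) + ((n2 : ℝ) + (k2 : ℝ) / 2 ^ (n2 + 1))
        = (n : ℝ) + (k : ℝ) / 2 ^ (n + 1) := by
  have e1 : 2 ^ (n1 + 1) * 2 ^ n2 = 2 ^ (n1 + n2 + 1) := by
    rw [← pow_add]; congr 1; omega
  have e2 : 2 ^ (n2 + 1) * 2 ^ n1 = 2 ^ (n1 + n2 + 1) := by
    rw [← pow_add]; congr 1; omega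
  have e3 : 2 ^ (n1 + n2 + 2) = 2 * 2 ^ (n1 + n2 + 1) := by ring
  have hp1 : 1 ≤ 2 ^ n1 := Nat.one_le_two_pow
  have hp2 : 1 ≤ 2 ^ n2 := Nat.one_le_two_pow
  have hs1 : 2 ^ n1 ≤ 2 ^ (n1 + n2 + 1) := Nat.pow_le_pow_right (by norm_num) (by omega)
  have hs2 : 2 ^ n2 ≤ 2 ^ (n1 + n2 + 1) := Nat.pow_le_pow_right (by norm_num) (by omega)
  have hb1 : k1 * 2 ^ n2 ≤ 2 ^ (n1 + n2 + 1) - 2 ^ n2 := by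
    calc k1 * 2 ^ n2 ≤ (2 ^ (n1 + 1) - 1) * 2 ^ n2 := Nat.mul_le_mul_right _ hk1
    _ = 2 ^ (n1 + 1) * 2 ^ n2 - 1 * 2 ^ n2 := Nat.sub_mul _ _ _
    _ = 2 ^ (n1 + n2 + 1) - 2 ^ n2 := by rw [e1, one_mul]
  have hb2 : k2 * 2 ^ n1 ≤ 2 ^ (n1 + n2 + 1) - 2 ^ n1 := by
    calc k2 * 2 ^ n1 ≤ (2 ^ (n2 + 1) - 1) * 2 ^ n1 := Nat.mul_le_mul_right _ hk2
    _ = 2 ^ (n2 + 1) * 2 ^ n1 - 1 * 2 ^ n1 := Nat.sub_mul _ _ _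
    _ = 2 ^ (n1 + n2 + 1) - 2 ^ n1 := by rw [e2, one_mul]
  set A := k1 * 2 ^ n2 with hA
  set B := k2 * 2 ^ n1 with hB
  have htb : A + B < 2 ^ (n1 + n2 + 2) := by omega
  have hR1 : (0:ℝ) < 2 ^ (n1 + 1) := by positivity
  have hR2 : (0:ℝ) < 2 ^ (n2 + 1) := by positivity
  rcases lt_or_ge (A + B) (2 ^ (n1 + n2 + 1)) with hc | hc
  · refine ⟨n1 + n2, A + B, by omega, by omega, ?_⟩
    have hR3 : (0:ℝ) < 2 ^ (n1 + n2 + 1) := by positivity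
    push_cast [hA, hB]
    field_simp
    ring
  · refine ⟨n1 + n2 + 1, 2 * (A + B) - 2 ^ (n1 + n2 + 2), by omega, by omega, ?_⟩
    have hR3 : (0:ℝ) < 2 ^ (n1 + n2 + 2) := by positivity
    rw [Nat.cast_sub (show 2 ^ (n1 + n2 + 2) ≤ 2 * (A + B) by omega)]
    push_cast [hA, hB, Nat.cast_sub (show 2 ^ (n1 + n2 + 2) ≤ 2 * (A + B) by omega)]
    field_simp
    ring

lemma Qset_add : ∀ x ∈ Qset, ∀ y ∈ Qset, x + y ∈ Qset := by
  intro x hx y hy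
  rcases hx with rfl | ⟨n1, k1, h1, hk1, rfl⟩
  · simpa using hy
  rcases hy with rfl | ⟨n2, k2, h2, hk2, rfl⟩
  · exact Or.inr ⟨n1, k1, h1, hk1, by ring⟩
  obtain ⟨n, k, hn, hk, he⟩ := add_rep n1 k1 n2 k2 h1 hk1 h2 hk2
  exact Or.inr ⟨n, k, hn, hk, he⟩

lemma Qset_finite (x : ℝ) : (Qset ∩ Set.Icc 0 x).Finite := by
  have hsub : Qset ∩ Set.Icc 0 x ⊆ insert 0
      ((fun p : ℕ × ℕ => (p.1 : ℝ) + (p.2 : ℝ) / 2 ^ (p.1 + 1)) ''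
        (Set.Iic ⌊x⌋₊ ×ˢ Set.Iic (2 ^ (⌊x⌋₊ + 2)))) := by
    rintro y ⟨(rfl | ⟨n, k, hn, hk, rfl⟩), hy0, hyx⟩
    · exact Set.mem_insert _ _
    · right
      refine ⟨(n, k), ⟨?_, ?_⟩, rfl⟩
      · have hkpos : (0:ℝ) ≤ (k : ℝ) / 2 ^ (n + 1) := by positivity
        exact Nat.le_floor (by linarith)
      · have hnf : n ≤ ⌊x⌋₊ := by
          have hkpos : (0:ℝ) ≤ (k : ℝ) / 2 ^ (n + 1) := by positivity
          exact Nat.le_floor (by linarith)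
        have : 2 ^ (n + 1) ≤ 2 ^ (⌊x⌋₊ + 2) := Nat.pow_le_pow_right (by norm_num) (by omega)
        simp only [Set.mem_Iic]
        exact le_trans (le_trans hk (Nat.sub_le _ _)) this
  exact Set.Finite.subset
    (Set.Finite.insert 0 (Set.Finite.image _ ((Set.finite_Iic _).prod (Set.finite_Iic _)))) hsub

lemma Qa_tendsto : Tendsto (fun i => Qa (i + 1) - Qa i) atTop (𝓝 0) := by
  have h0 : Tendsto (fun i : ℕ => (2 : ℝ) / ((i : ℝ) + 1)) atTop (𝓝 0) := by
    have h := (tendsto_const_div_atTop_nhds_zero_nat (2:ℝ)).comp (tendsto_add_atTop_nat 1)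
    refine h.congr fun i => ?_
    simp only [Function.comp]
    push_cast
    ring
  refine squeeze_zero' ?_ ?_ h0
  · filter_upwards [eventually_ge_atTop 1] with i hi
    rw [Qa_diff i hi]; positivity
  · filter_upwards [eventually_ge_atTop 1] with i hi
    rw [Qa_diff i hi]
    obtain ⟨hm2, hle, hlt⟩ := Qa_log_facts i hi
    set m := Nat.log 2 (i + 3)
    have hc : (i : ℝ) + 3 < 2 * 2 ^ m := by
      have : ((i + 3 : ℕ) : ℝ) < ((2 ^ (m + 1) : ℕ) : ℝ) := by exact_mod_cast hlt
      push_cast at this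
      rw [pow_succ] at this
      linarith
    have hm0 : (0:ℝ) < 2 ^ m := by positivity
    have hi0 : (0:ℝ) < (i : ℝ) + 1 := by positivity
    rw [← one_div, div_le_div_iff₀ hm0 hi0]
    linarith

/-- The set `Q = {0} ∪ {n + k/2^(n+1) : n ≥ 1, 0 ≤ k ≤ 2^(n+1) - 1}` is a tempered
monoid. -/
theorem quarters_monoid_is_tempered :
    (0 : ℝ) ∈ {0} ∪ {x : ℝ | ∃ n k : ℕ, 1 ≤ n ∧ k ≤ 2 ^ (n + 1) - 1 ∧
        x = (n : ℝ) + (k : ℝ) / 2 ^ (n + 1)} ∧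
    (∀ x ∈ ({0} ∪ {x : ℝ | ∃ n k : ℕ, 1 ≤ n ∧ k ≤ 2 ^ (n + 1) - 1 ∧
        x = (n : ℝ) + (k : ℝ) / 2 ^ (n + 1)} : Set ℝ),
      ∀ y ∈ ({0} ∪ {x : ℝ | ∃ n k : ℕ, 1 ≤ n ∧ k ≤ 2 ^ (n + 1) - 1 ∧
        x = (n : ℝ) + (k : ℝ) / 2 ^ (n + 1)} : Set ℝ),
        x + y ∈ ({0} ∪ {x : ℝ | ∃ n k : ℕ, 1 ≤ n ∧ k ≤ 2 ^ (n + 1) - 1 ∧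
          x = (n : ℝ) + (k : ℝ) / 2 ^ (n + 1)} : Set ℝ)) ∧
    (∀ x : ℝ, (({0} ∪ {x : ℝ | ∃ n k : ℕ, 1 ≤ n ∧ k ≤ 2 ^ (n + 1) - 1 ∧
        x = (n : ℝ) + (k : ℝ) / 2 ^ (n + 1)} : Set ℝ) ∩ Set.Icc 0 x).Finite) ∧
    ∃ a : ℕ → ℝ, StrictMono a ∧ a 0 = 0 ∧
      Set.range a = ({0} ∪ {x : ℝ | ∃ n k : ℕ, 1 ≤ n ∧ k ≤ 2 ^ (n + 1) - 1 ∧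
        x = (n : ℝ) + (k : ℝ) / 2 ^ (n + 1)} : Set ℝ) ∧
      Tendsto (fun n => a (n + 1) - a n) atTop (𝓝 0) := by
  have hQ : ({0} ∪ {x : ℝ | ∃ n k : ℕ, 1 ≤ n ∧ k ≤ 2 ^ (n + 1) - 1 ∧
      x = (n : ℝ) + (k : ℝ) / 2 ^ (n + 1)} : Set ℝ) = Qset := rfl
  rw [hQ]
  exact ⟨Or.inl rfl, Qset_add, Qset_finite,
    Qa, Qa_mono, Qa_zero, range_Qa, Qa_tendsto⟩
end

section
/- The well-tempered harmonic semigroup H = {0, 12, 19, 24, 28, 31, 34, 36, 38, 40, 42, 43, 45, 46, 47, 48} ∪ {n ∈ ℕ : n > 48} satisfies H = {⌊12·log₂ n + 0.6⌋ : n ∈ ℕ, n ≥ 1}, i.e., H is exactly the image of the logarithmic monoid L = {log₂ n : n ≥ 1} under the map x ↦ ⌊12x + 0.6⌋. -/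
set_option maxRecDepth 100000

lemma logb_ge_aux (n : ℕ) (a : ℤ) (h : (2:ℝ)^a ≤ (n:ℝ)^(120:ℕ)) :
    (a:ℝ) ≤ 120 * Real.logb 2 n := by
  have hpos : (0:ℝ) < (2:ℝ)^a := zpow_pos (by norm_num) a
  have := (Real.logb_le_logb_of_le (one_lt_two) hpos h)
  rwa [show ((2:ℝ)^a) = (2:ℝ)^((a:ℝ)) by rw [Real.rpow_intCast],
    Real.logb_rpow (by norm_num) (by norm_num), Real.logb_pow] at this

lemma logb_lt_aux (n : ℕ) (hn : 1 ≤ n) (b : ℤ) (h : ((n:ℝ))^(120:ℕ) < (2:ℝ)^b) :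
    120 * Real.logb 2 n < (b:ℝ) := by
  have hpos : (0:ℝ) < (n:ℝ)^(120:ℕ) := by positivity
  have := Real.logb_lt_logb one_lt_two hpos h
  rwa [show ((2:ℝ)^b) = (2:ℝ)^((b:ℝ)) by rw [Real.rpow_intCast],
    Real.logb_rpow (by norm_num) (by norm_num), Real.logb_pow] at this

lemma floor_eq_of (n : ℕ) (hn : 1 ≤ n) (m : ℤ)
    (h1 : (2:ℝ)^(10*m-6) ≤ (n:ℝ)^(120:ℕ))
    (h2 : ((n:ℝ))^(120:ℕ) < (2:ℝ)^(10*m+4)) :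
    ⌊12 * Real.logb 2 (n:ℝ) + 0.6⌋ = m := by
  have hl := logb_ge_aux n _ h1
  have hu := logb_lt_aux n hn _ h2
  push_cast at hl hu
  rw [Int.floor_eq_iff]
  constructor <;> [skip; push_cast] <;> norm_num <;> linarith

lemma ge49 (n : ℕ) (hn : 17 ≤ n) : 49 ≤ ⌊12 * Real.logb 2 (n:ℝ) + 0.6⌋ := by
  have h484 : (484:ℝ) ≤ 120 * Real.logb 2 (17:ℕ) :=
    logb_ge_aux 17 484 (by norm_num <;> norm_cast)
  have hmono : Real.logb 2 ((17:ℕ):ℝ) ≤ Real.logb 2 (n:ℝ) := by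
    apply Real.logb_le_logb_of_le one_lt_two (by norm_num)
    exact_mod_cast hn
  rw [Int.le_floor]
  push_cast at h484 hmono ⊢
  linarith

lemma step_bound (k : ℕ) (hk : 17 ≤ k) :
    ⌊12 * Real.logb 2 ((k+1 : ℕ):ℝ) + 0.6⌋ ≤ ⌊12 * Real.logb 2 (k:ℝ) + 0.6⌋ + 1 := by
  have hk0 : (0:ℝ) < (k:ℝ) := by positivity
  have hnat : (k+1)^12 < 2 * k^12 := by
    have h1 : 17*(k+1) ≤ 18*k := by omega
    have h2 : (17*(k+1))^12 ≤ (18*k)^12 := Nat.pow_le_pow_left h1 12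
    have h3 : 17^12 * (k+1)^12 ≤ 18^12 * k^12 := by
      calc 17^12 * (k+1)^12 = (17*(k+1))^12 := (mul_pow _ _ _).symm
        _ ≤ (18*k)^12 := h2
        _ = 18^12 * k^12 := mul_pow _ _ _
    have h4 : 18^12 * k^12 < 17^12 * (2 * k^12) := by
      have hkpos : 0 < k^12 := Nat.pow_pos (by omega)
      nlinarith [hkpos]
    exact lt_of_mul_lt_mul_left (lt_of_le_of_lt h3 h4) (Nat.zero_le _)
  have hR : ((k:ℝ)+1)^12 < 2 * (k:ℝ)^12 := by exact_mod_cast hnat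
  have hlog := Real.logb_lt_logb one_lt_two (by positivity) hR
  rw [Real.logb_pow, Real.logb_mul (by norm_num) (by positivity), Real.logb_pow,
    Real.logb_self_eq_one (b := 2) (by norm_num)] at hlog
  push_cast at hlog
  have := Int.floor_le_floor (R := ℝ)
    (a := 12 * Real.logb 2 ((k:ℝ)+1) + 0.6) (b := 12 * Real.logb 2 (k:ℝ) + 0.6 + 1)
    (by linarith)
  rw [Int.floor_add_one] at this
  push_cast
  exact this

lemma exists_hit (m : ℤ) (hm : 49 ≤ m) :
    ∃ n : ℕ, 17 ≤ n ∧ ⌊12 * Real.logb 2 (n:ℝ) + 0.6⌋ = m := by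
  classical
  rcases eq_or_lt_of_le hm with h49 | h50
  · exact ⟨17, le_refl _, by rw [← h49]; exact floor_eq_of 17 (by norm_num) 49 (by norm_num <;> norm_cast) (by norm_num <;> norm_cast)⟩
  · have h50' : 50 ≤ m := h50
    have hP : ∃ n : ℕ, 17 ≤ n ∧ m ≤ ⌊12 * Real.logb 2 (n:ℝ) + 0.6⌋ := by
      refine ⟨2 ^ m.toNat, ?_, ?_⟩
      · calc 17 ≤ 2^5 := by norm_num
          _ ≤ 2 ^ m.toNat := Nat.pow_le_pow_right (by norm_num) (by omega)
      · have hcast : ((2 ^ m.toNat : ℕ) : ℝ) = (2:ℝ) ^ m.toNat := by push_cast; ring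
        have hlogb : Real.logb 2 ((2 ^ m.toNat : ℕ) : ℝ) = (m.toNat : ℝ) := by
          rw [hcast, Real.logb_pow, Real.logb_self_eq_one (b := 2) (by norm_num), mul_one]
        have hfl : ⌊12 * Real.logb 2 ((2 ^ m.toNat : ℕ) : ℝ) + 0.6⌋ = 12 * (m.toNat : ℤ) := by
          rw [hlogb, Int.floor_eq_iff]
          push_cast
          constructor <;> [linarith; norm_num]
        rw [hfl]
        omega
    set N := Nat.find hP with hNdef
    obtain ⟨hN17, hNle⟩ : 17 ≤ N ∧ m ≤ ⌊12 * Real.logb 2 (N:ℝ) + 0.6⌋ := Nat.find_spec hP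
    have hfN17 : ⌊12 * Real.logb 2 ((17:ℕ):ℝ) + 0.6⌋ = 49 :=
      floor_eq_of 17 (by norm_num) 49 (by norm_num <;> norm_cast) (by norm_num <;> norm_cast)
    have hNne : N ≠ 17 := by
      intro h
      rw [h, hfN17] at hNle
      omega
    have hN18 : 18 ≤ N := by omega
    have hmin : ¬(17 ≤ N - 1 ∧ m ≤ ⌊12 * Real.logb 2 ((N-1 : ℕ):ℝ) + 0.6⌋) :=
      Nat.find_min hP (by omega)
    have hlt : ⌊12 * Real.logb 2 ((N-1 : ℕ):ℝ) + 0.6⌋ < m := by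
      by_contra h
      exact hmin ⟨by omega, by omega⟩
    have hstep := step_bound (N - 1) (by omega)
    rw [show N - 1 + 1 = N by omega] at hstep
    exact ⟨N, hN17, le_antisymm (by omega) hNle⟩

/-- The well-tempered harmonic semigroup `H` is the image of the logarithmic monoid under
the map `x ↦ ⌊12x + 0.6⌋`. -/
theorem well_tempered_harmonic_semigroup_eq_floor_log_image :
    ({0, 12, 19, 24, 28, 31, 34, 36, 38, 40, 42, 43, 45, 46, 47, 48} ∪
        {n : ℕ | n > 48} : Set ℕ) =
      {m : ℕ | ∃ n : ℕ, 1 ≤ n ∧ (m : ℤ) = ⌊12 * Real.logb 2 n + 0.6⌋} := by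
  have e1 : ⌊12 * Real.logb 2 ((1:ℕ):ℝ) + 0.6⌋ = 0 :=
    floor_eq_of 1 (by norm_num) 0 (by norm_num <;> norm_cast) (by norm_num <;> norm_cast)
  have e2 : ⌊12 * Real.logb 2 ((2:ℕ):ℝ) + 0.6⌋ = 12 :=
    floor_eq_of 2 (by norm_num) 12 (by norm_num <;> norm_cast) (by norm_num <;> norm_cast)
  have e3 : ⌊12 * Real.logb 2 ((3:ℕ):ℝ) + 0.6⌋ = 19 :=
    floor_eq_of 3 (by norm_num) 19 (by norm_num <;> norm_cast) (by norm_num <;> norm_cast)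
  have e4 : ⌊12 * Real.logb 2 ((4:ℕ):ℝ) + 0.6⌋ = 24 :=
    floor_eq_of 4 (by norm_num) 24 (by norm_num <;> norm_cast) (by norm_num <;> norm_cast)
  have e5 : ⌊12 * Real.logb 2 ((5:ℕ):ℝ) + 0.6⌋ = 28 :=
    floor_eq_of 5 (by norm_num) 28 (by norm_num <;> norm_cast) (by norm_num <;> norm_cast)
  have e6 : ⌊12 * Real.logb 2 ((6:ℕ):ℝ) + 0.6⌋ = 31 :=
    floor_eq_of 6 (by norm_num) 31 (by norm_num <;> norm_cast) (by norm_num <;> norm_cast)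
  have e7 : ⌊12 * Real.logb 2 ((7:ℕ):ℝ) + 0.6⌋ = 34 :=
    floor_eq_of 7 (by norm_num) 34 (by norm_num <;> norm_cast) (by norm_num <;> norm_cast)
  have e8 : ⌊12 * Real.logb 2 ((8:ℕ):ℝ) + 0.6⌋ = 36 :=
    floor_eq_of 8 (by norm_num) 36 (by norm_num <;> norm_cast) (by norm_num <;> norm_cast)
  have e9 : ⌊12 * Real.logb 2 ((9:ℕ):ℝ) + 0.6⌋ = 38 :=
    floor_eq_of 9 (by norm_num) 38 (by norm_num <;> norm_cast) (by norm_num <;> norm_cast)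
  have e10 : ⌊12 * Real.logb 2 ((10:ℕ):ℝ) + 0.6⌋ = 40 :=
    floor_eq_of 10 (by norm_num) 40 (by norm_num <;> norm_cast) (by norm_num <;> norm_cast)
  have e11 : ⌊12 * Real.logb 2 ((11:ℕ):ℝ) + 0.6⌋ = 42 :=
    floor_eq_of 11 (by norm_num) 42 (by norm_num <;> norm_cast) (by norm_num <;> norm_cast)
  have e12 : ⌊12 * Real.logb 2 ((12:ℕ):ℝ) + 0.6⌋ = 43 :=
    floor_eq_of 12 (by norm_num) 43 (by norm_num <;> norm_cast) (by norm_num <;> norm_cast)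
  have e13 : ⌊12 * Real.logb 2 ((13:ℕ):ℝ) + 0.6⌋ = 45 :=
    floor_eq_of 13 (by norm_num) 45 (by norm_num <;> norm_cast) (by norm_num <;> norm_cast)
  have e14 : ⌊12 * Real.logb 2 ((14:ℕ):ℝ) + 0.6⌋ = 46 :=
    floor_eq_of 14 (by norm_num) 46 (by norm_num <;> norm_cast) (by norm_num <;> norm_cast)
  have e15 : ⌊12 * Real.logb 2 ((15:ℕ):ℝ) + 0.6⌋ = 47 :=
    floor_eq_of 15 (by norm_num) 47 (by norm_num <;> norm_cast) (by norm_num <;> norm_cast)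
  have e16 : ⌊12 * Real.logb 2 ((16:ℕ):ℝ) + 0.6⌋ = 48 :=
    floor_eq_of 16 (by norm_num) 48 (by norm_num <;> norm_cast) (by norm_num <;> norm_cast)
  ext m
  simp only [Set.mem_union, Set.mem_insert_iff, Set.mem_singleton_iff, Set.mem_setOf_eq]
  constructor
  · rintro (h | h)
    · rcases h with rfl|rfl|rfl|rfl|rfl|rfl|rfl|rfl|rfl|rfl|rfl|rfl|rfl|rfl|rfl|rfl
      · exact ⟨1, by norm_num, by rw [e1]; norm_num⟩
      · exact ⟨2, by norm_num, by rw [e2]; norm_num⟩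
      · exact ⟨3, by norm_num, by rw [e3]; norm_num⟩
      · exact ⟨4, by norm_num, by rw [e4]; norm_num⟩
      · exact ⟨5, by norm_num, by rw [e5]; norm_num⟩
      · exact ⟨6, by norm_num, by rw [e6]; norm_num⟩
      · exact ⟨7, by norm_num, by rw [e7]; norm_num⟩
      · exact ⟨8, by norm_num, by rw [e8]; norm_num⟩
      · exact ⟨9, by norm_num, by rw [e9]; norm_num⟩
      · exact ⟨10, by norm_num, by rw [e10]; norm_num⟩
      · exact ⟨11, by norm_num, by rw [e11]; norm_num⟩
      · exact ⟨12, by norm_num, by rw [e12]; norm_num⟩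
      · exact ⟨13, by norm_num, by rw [e13]; norm_num⟩
      · exact ⟨14, by norm_num, by rw [e14]; norm_num⟩
      · exact ⟨15, by norm_num, by rw [e15]; norm_num⟩
      · exact ⟨16, by norm_num, by rw [e16]; norm_num⟩
    · obtain ⟨n, hn17, hfe⟩ := exists_hit (m:ℤ) (by omega)
      exact ⟨n, by omega, hfe.symm⟩
  · rintro ⟨n, hn1, heq⟩
    by_cases h17 : 17 ≤ n
    · right
      have := ge49 n h17
      omega
    · left
      interval_cases n
      · rw [e1] at heq; omega
      · rw [e2] at heq; omega
      · rw [e3] at heq; omega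
      · rw [e4] at heq; omega
      · rw [e5] at heq; omega
      · rw [e6] at heq; omega
      · rw [e7] at heq; omega
      · rw [e8] at heq; omega
      · rw [e9] at heq; omega
      · rw [e10] at heq; omega
      · rw [e11] at heq; omega
      · rw [e12] at heq; omega
      · rw [e13] at heq; omega
      · rw [e14] at heq; omega
      · rw [e15] at heq; omega
      · rw [e16] at heq; omega
end
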